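/- arXiv:2006.08372 — 7 statements merged into one kernel-verified Lean document; each statement's English description precedes it below -/
import Mathlib

section
/- For any n-variable Boolean function f, if g achieves FAI(f) (i.e., g ≠ 1, f·g ≠ 0, and deg(g) + deg(f·g) = FAI(f)), then deg(f·g) ≥ deg(g). -/
open scoped BigOperators

abbrev BF (n : ℕ) := (Fin n → ZMod 2) → ZMod 2

/-- Algebraic degree of a Boolean function: the least `d` such that `f` is
represented by a multivariate polynomial of total degree at most `d`. -/
noncomputable def degB {n : ℕ} (f : BF n) : ℕ :=
  sInf {d | ∃ p : MvPolynomial (Fin n) (ZMod 2),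
    (∀ x, MvPolynomial.eval x p = f x) ∧ p.totalDegree ≤ d}

/-- Fast algebraic immunity. -/
noncomputable def FAI {n : ℕ} (f : BF n) : ℕ :=
  sInf {m | ∃ g : BF n, g ≠ 1 ∧ f * g ≠ 0 ∧ m = degB g + degB (f * g)}

/-- Minimum degree of a nonzero annihilator. -/
noncomputable def LDA {n : ℕ} (f : BF n) : ℕ :=
  sInf {m | ∃ g : BF n, g ≠ 0 ∧ f * g = 0 ∧ m = degB g}

noncomputable def AI {n : ℕ} (f : BF n) : ℕ := min (LDA f) (LDA (1 + f))

noncomputable def muk {n : ℕ} (k : ℕ) (f : BF n) : ℕ :=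
  sInf {m | ∃ g : BF n, degB g ≤ k ∧ f * g ≠ 0 ∧ m = degB (f * g)}

def wtB {n : ℕ} (f : BF n) : ℕ := (Finset.univ.filter (fun x => f x = 1)).card

def IsAffineAut {n : ℕ} (A : (Fin n → ZMod 2) → (Fin n → ZMod 2)) : Prop :=
  ∃ (L : (Fin n → ZMod 2) ≃ₗ[ZMod 2] (Fin n → ZMod 2)) (b : Fin n → ZMod 2),
    ∀ x, A x = L x + b

noncomputable def RMcode (n e : ℕ) :
    Submodule (ZMod 2) ((Fin n → ZMod 2) → ZMod 2) :=
  Submodule.span (ZMod 2) {f | ∃ p : MvPolynomial (Fin n) (ZMod 2),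
    p.totalDegree ≤ e ∧ ∀ x, MvPolynomial.eval x p = f x}

/-- The code obtained by keeping only the coordinates in `S`
(i.e. puncturing on the complement of `S`). -/
noncomputable def restrictCode {n : ℕ}
    (C : Submodule (ZMod 2) ((Fin n → ZMod 2) → ZMod 2))
    (S : Set (Fin n → ZMod 2)) : Submodule (ZMod 2) (S → ZMod 2) :=
  C.map (LinearMap.funLeft (ZMod 2) (ZMod 2) (Subtype.val : S → (Fin n → ZMod 2)))

noncomputable def dualCode {ι : Type*} [Fintype ι]
    (C : Submodule (ZMod 2) (ι → ZMod 2)) : Submodule (ZMod 2) (ι → ZMod 2) where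
  carrier := {w | ∀ c ∈ C, ∑ i, w i * c i = 0}
  add_mem' := by
    intro a b ha hb c hc
    simp only [Pi.add_apply, add_mul, Finset.sum_add_distrib, ha c hc, hb c hc, add_zero]
  zero_mem' := by intro c hc; simp
  smul_mem' := by
    intro r a ha c hc
    simp only [Pi.smul_apply, smul_eq_mul, mul_assoc, ← Finset.mul_sum, ha c hc, mul_zero]

noncomputable instance instFintypeSubsetBF {α : Type*} [Fintype α] (S : Set α) :
    Fintype ↥S := Fintype.ofFinite _

def suppB {n : ℕ} (f : BF n) : Set (Fin n → ZMod 2) := {x | f x = 1}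


theorem stmt0 {n : ℕ} (f g : BF n) (hg1 : g ≠ 1) (hfg : f * g ≠ 0)
    (hach : degB g + degB (f * g) = FAI f) :
    degB g ≤ degB (f * g) := by
  have h2 : ∀ a : ZMod 2, a * a = a := by decide
  have hsq : f * (f * g) = f * g := by
    funext x
    simp only [Pi.mul_apply, ← mul_assoc, h2]
  have hg1' : f * g ≠ 1 := by
    intro h
    apply hg1
    funext x
    have hx := congrFun h x
    simp only [Pi.mul_apply, Pi.one_apply] at hx
    have : ∀ a b : ZMod 2, a * b = 1 → b = 1 := by decide
    exact this _ _ hx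
  have hle : FAI f ≤ degB (f * g) + degB (f * g) :=
    Nat.sInf_le ⟨f * g, hg1', by rw [hsq]; exact hfg, by rw [hsq]⟩
  omega
end

section
/- For any n-variable Boolean function f, min(FAI(f), FAI(1+f)) ≤ 2·AI(f). -/
open scoped BigOperators

lemma FAI_zero {n : ℕ} : FAI (0 : BF n) = 0 := by
  unfold FAI
  convert Nat.sInf_empty
  ext m
  simp only [Set.mem_setOf_eq, Set.mem_empty_iff_false, iff_false]
  rintro ⟨g, _, hg, _⟩
  exact hg (zero_mul g)

lemma key2 : ∀ a b : ZMod 2, a + b = 0 → b = a := by decide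

lemma two_eq_zero {n : ℕ} (x : Fin n → ZMod 2) : (1 + 1 : BF n) x = 0 := by
  show (1 : ZMod 2) + 1 = 0
  decide

theorem stmt3 {n : ℕ} (f : BF n) :
    min (FAI f) (FAI (1 + f)) ≤ 2 * AI f := by
  by_cases h0 : f = 0
  · subst h0
    have : FAI (0 : BF n) = 0 := FAI_zero
    calc min (FAI (0 : BF n)) (FAI (1 + 0)) ≤ FAI (0 : BF n) := min_le_left _ _
      _ = 0 := this
      _ ≤ _ := Nat.zero_le _
  by_cases h1 : f = 1
  · subst h1
    have e : (1 + 1 : BF n) = 0 := by funext x; exact two_eq_zero x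
    calc min (FAI (1 : BF n)) (FAI (1 + 1)) ≤ FAI (1 + 1 : BF n) := min_le_right _ _
      _ = 0 := by rw [e, FAI_zero]
      _ ≤ _ := Nat.zero_le _
  -- both annihilator sets are nonempty
  have hne1 : (1 + f : BF n) ≠ 0 := by
    intro h
    apply h1
    funext x
    have := congrFun h x
    simpa using key2 _ _ this
  have hfne : f ≠ 0 := h0
  have hS : {m | ∃ g : BF n, g ≠ 0 ∧ f * g = 0 ∧ m = degB g}.Nonempty := by
    refine ⟨degB (1 + f), 1 + f, hne1, ?_, rfl⟩
    funext x
    have : ∀ a : ZMod 2, a * (1 + a) = 0 := by decide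
    exact this (f x)
  have hT : {m | ∃ g : BF n, g ≠ 0 ∧ (1 + f) * g = 0 ∧ m = degB g}.Nonempty := by
    refine ⟨degB f, f, hfne, ?_, rfl⟩
    funext x
    have : ∀ a : ZMod 2, (1 + a) * a = 0 := by decide
    exact this (f x)
  rcases le_total (LDA f) (LDA (1 + f)) with hle | hle
  · -- AI f = LDA f; take minimal annihilator g of f
    have hAI : AI f = LDA f := min_eq_left hle
    obtain ⟨g, hg0, hfg, hdg⟩ := Nat.sInf_mem hS
    have hgg : (1 + f) * g = g := by
      rw [add_mul, one_mul, hfg, add_zero]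
    have hg1 : g ≠ 1 := by
      intro h
      apply h0
      rw [h, mul_one] at hfg
      exact hfg
    have hFAI : FAI (1 + f) ≤ degB g + degB g := by
      apply Nat.sInf_le
      exact ⟨g, hg1, by rw [hgg]; exact hg0, by rw [hgg]⟩
    calc min (FAI f) (FAI (1 + f)) ≤ FAI (1 + f) := min_le_right _ _
      _ ≤ degB g + degB g := hFAI
      _ = 2 * AI f := by rw [hAI]; unfold LDA; rw [hdg, two_mul]
  · -- AI f = LDA (1 + f); take minimal annihilator h of 1 + f
    have hAI : AI f = LDA (1 + f) := min_eq_right hle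
    obtain ⟨g, hg0, hfg, hdg⟩ := Nat.sInf_mem hT
    have hgg : f * g = g := by
      funext x
      have := congrFun hfg x
      simp only [Pi.mul_apply, Pi.add_apply, Pi.one_apply, Pi.zero_apply] at this ⊢
      have h3 : ∀ a b : ZMod 2, (1 + a) * b = 0 → a * b = b := by decide
      exact h3 _ _ this
    have hg1 : g ≠ 1 := by
      intro h
      apply h1
      rw [h, mul_one] at hfg
      funext x
      have := congrFun hfg x
      simpa using key2 _ _ this
    have hFAI : FAI f ≤ degB g + degB g := by
      apply Nat.sInf_le
      exact ⟨g, hg1, by rw [hgg]; exact hg0, by rw [hgg]⟩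
    calc min (FAI f) (FAI (1 + f)) ≤ FAI f := min_le_left _ _
      _ ≤ degB g + degB g := hFAI
      _ = 2 * AI f := by rw [hAI]; unfold LDA; rw [hdg, two_mul]
end

section
/- Let f be an n-variable Boolean function. Then LDA(f) = min over 1 ≤ k ≤ n of μ_k(f+1), and moreover μ_k(f+1) = LDA(f) for all k ≥ LDA(f). -/
open scoped BigOperators

section Aux

variable {n : ℕ}

noncomputable def indP (n : ℕ) (a : Fin n → ZMod 2) : MvPolynomial (Fin n) (ZMod 2) :=
  ∏ i, (MvPolynomial.X i + MvPolynomial.C (a i) + 1)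

lemma eval_indP (a x : Fin n → ZMod 2) :
    MvPolynomial.eval x (indP n a) = if x = a then 1 else 0 := by
  unfold indP
  rw [MvPolynomial.eval_prod]
  simp only [map_add, MvPolynomial.eval_X, MvPolynomial.eval_C, map_one]
  by_cases hxa : x = a
  · subst hxa
    rw [if_pos rfl]
    apply Finset.prod_eq_one
    intro i _
    have h : ∀ b : ZMod 2, b + b + 1 = 1 := by decide
    exact h (x i)
  · rw [if_neg hxa]
    obtain ⟨i, hi⟩ := Function.ne_iff.mp hxa
    apply Finset.prod_eq_zero (Finset.mem_univ i)
    have h : ∀ b c : ZMod 2, b ≠ c → b + c + 1 = 0 := by decide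
    exact h (x i) (a i) hi

lemma td_indP (a : Fin n → ZMod 2) : (indP n a).totalDegree ≤ n := by
  unfold indP
  calc (∏ i, (MvPolynomial.X i + MvPolynomial.C (a i) + 1)).totalDegree
      ≤ ∑ i : Fin n, (MvPolynomial.X i + MvPolynomial.C (a i) + 1).totalDegree :=
        MvPolynomial.totalDegree_finset_prod _ _
    _ ≤ ∑ _i : Fin n, 1 := by
        apply Finset.sum_le_sum
        intro i _
        refine le_trans (MvPolynomial.totalDegree_add _ _) ?_
        refine max_le (le_trans (MvPolynomial.totalDegree_add _ _) ?_) ?_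
        · simp [MvPolynomial.totalDegree_X, MvPolynomial.totalDegree_C]
        · simp [MvPolynomial.totalDegree_one]
    _ = n := by simp

lemma exists_rep (f : BF n) : ∃ p : MvPolynomial (Fin n) (ZMod 2),
    (∀ x, MvPolynomial.eval x p = f x) ∧ p.totalDegree ≤ n := by
  refine ⟨∑ a : Fin n → ZMod 2, MvPolynomial.C (f a) * indP n a, ?_, ?_⟩
  · intro x
    rw [map_sum]
    simp only [map_mul, MvPolynomial.eval_C, eval_indP, mul_ite, mul_one, mul_zero]
    simp
  · refine le_trans (MvPolynomial.totalDegree_finset_sum _ _) ?_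
    apply Finset.sup_le
    intro a _
    refine le_trans (MvPolynomial.totalDegree_mul _ _) ?_
    simp only [MvPolynomial.totalDegree_C, zero_add]
    exact td_indP a

lemma degB_le (f : BF n) : degB f ≤ n := by
  obtain ⟨p, hp, hpn⟩ := exists_rep f
  exact Nat.sInf_le ⟨p, hp, hpn⟩

lemma degB_one_le (k : ℕ) : degB (1 : BF n) ≤ k := by
  refine le_trans (Nat.sInf_le ⟨1, ?_, ?_⟩) (Nat.zero_le k)
  · intro x; simp
  · simp [MvPolynomial.totalDegree_one]

end Aux

theorem stmt5 {n : ℕ} (hn : 1 ≤ n) (f : BF n) :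
    LDA f = sInf {m | ∃ k, 1 ≤ k ∧ k ≤ n ∧ m = muk k (f + 1)} ∧
    ∀ k, LDA f ≤ k → muk k (f + 1) = LDA f := by
  by_cases h0 : f + 1 = 0
  · -- f is the constant 1 function
    have hf1 : f = 1 := by
      funext x
      have hx := congrFun h0 x
      simp only [Pi.add_apply, Pi.one_apply, Pi.zero_apply] at hx ⊢
      have h : ∀ a : ZMod 2, a + 1 = 0 → a = 1 := by decide
      exact h _ hx
    have hmuk : ∀ k, muk k (f + 1) = 0 := by
      intro k
      unfold muk
      rw [h0]
      convert Nat.sInf_empty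
      rw [Set.eq_empty_iff_forall_notMem]
      rintro m ⟨g, _, hne, _⟩
      exact hne (zero_mul g)
    have hLDA : LDA f = 0 := by
      unfold LDA
      rw [hf1]
      convert Nat.sInf_empty
      rw [Set.eq_empty_iff_forall_notMem]
      rintro m ⟨g, hgne, hg0, _⟩
      exact hgne ((one_mul g) ▸ hg0)
    constructor
    · rw [hLDA]
      symm
      rw [Nat.sInf_eq_zero]
      exact Or.inl ⟨1, le_refl 1, hn, (hmuk 1).symm⟩
    · intro k _
      rw [hmuk, hLDA]
  · -- main case : f + 1 ≠ 0
    -- there is a point where f vanishes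
    have hx0 : ∃ x0, f x0 = 0 := by
      by_contra hc
      push_neg at hc
      apply h0
      funext x
      have h1 : f x = 1 := by
        have h : ∀ a : ZMod 2, a ≠ 0 → a = 1 := by decide
        exact h _ (hc x)
      show f x + 1 = 0
      rw [h1]; decide
    obtain ⟨x0, hx0⟩ := hx0
    -- the annihilator set of f is nonempty
    have hLne : {m | ∃ g : BF n, g ≠ 0 ∧ f * g = 0 ∧ m = degB g}.Nonempty := by
      refine ⟨degB (fun x => if x = x0 then 1 else 0), fun x => if x = x0 then 1 else 0,
        ?_, ?_, rfl⟩
      · intro h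
        have := congrFun h x0
        simp at this
      · funext x
        show f x * (if x = x0 then 1 else 0) = 0
        by_cases hx : x = x0
        · subst hx; rw [if_pos rfl, mul_one, hx0]
        · rw [if_neg hx, mul_zero]
    obtain ⟨g0, hg0ne, hfg0, hdeq⟩ := Nat.sInf_mem hLne
    have hdeq : LDA f = degB g0 := hdeq
    -- key fact: (f+1) * g0 = g0
    have K1 : (f + 1) * g0 = g0 := by
      funext x
      have hz : f x * g0 x = 0 := congrFun hfg0 x
      show (f x + 1) * g0 x = g0 x
      rw [add_mul, one_mul, hz, zero_add]
    -- key fact: any nonzero (f+1)*g is an annihilator of f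
    have K2 : ∀ g : BF n, (f + 1) * g ≠ 0 → LDA f ≤ degB ((f + 1) * g) := by
      intro g hne
      apply Nat.sInf_le
      refine ⟨(f + 1) * g, hne, ?_, rfl⟩
      funext x
      show f x * ((f x + 1) * g x) = 0
      have h : ∀ a : ZMod 2, a * (a + 1) = 0 := by decide
      rw [← mul_assoc, h, zero_mul]
    have hg0n : (f + 1) * g0 ≠ 0 := by rw [K1]; exact hg0ne
    -- part 2
    have K3 : ∀ k, LDA f ≤ k → muk k (f + 1) = LDA f := by
      intro k hk
      have mem : LDA f ∈ {m | ∃ g : BF n, degB g ≤ k ∧ (f + 1) * g ≠ 0 ∧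
          m = degB ((f + 1) * g)} := ⟨g0, hdeq ▸ hk, hg0n, by rw [K1, hdeq]⟩
      refine le_antisymm (Nat.sInf_le mem) ?_
      obtain ⟨g', _, hg'ne, heq'⟩ := Nat.sInf_mem ⟨LDA f, mem⟩
      have heq' : muk k (f + 1) = degB ((f + 1) * g') := heq'
      rw [heq']
      exact K2 g' hg'ne
    have hLn : LDA f ≤ n := hdeq ▸ degB_le g0
    refine ⟨?_, K3⟩
    have memS : LDA f ∈ {m | ∃ k, 1 ≤ k ∧ k ≤ n ∧ m = muk k (f + 1)} :=
      ⟨n, hn, le_refl n, (K3 n hLn).symm⟩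
    refine le_antisymm ?_ (Nat.sInf_le memS)
    obtain ⟨k, _, _, heq⟩ := Nat.sInf_mem ⟨LDA f, memS⟩
    rw [heq]
    have hne : {m | ∃ g : BF n, degB g ≤ k ∧ (f + 1) * g ≠ 0 ∧
        m = degB ((f + 1) * g)}.Nonempty :=
      ⟨degB ((f + 1) * 1), 1, degB_one_le k, by rw [mul_one]; exact h0, rfl⟩
    obtain ⟨g', _, hg'ne, heq'⟩ := Nat.sInf_mem hne
    have heq' : muk k (f + 1) = degB ((f + 1) * g') := heq'
    rw [heq']
    exact K2 g' hg'ne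
end

section
/- Let f be an n-variable Boolean function with f ≠ δ_0 and f^c ≠ δ_0, where f^c = f + δ_0 is the algebraic complement of f. Then |FAI(f^c) − FAI(f)| ≤ 2. -/
open scoped BigOperators

def delta0 {n : ℕ} : BF n := fun x => if x = 0 then 1 else 0


open MvPolynomial in
lemma BF.exists_repr {n : ℕ} (f : BF n) :
    ∃ p : MvPolynomial (Fin n) (ZMod 2), (∀ x, eval x p = f x) ∧ p.totalDegree ≤ n := by
  refine ⟨∑ a : Fin n → ZMod 2, C (f a) * ∏ i, (X i + C (a i + 1)), ?_, ?_⟩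
  · intro x
    have key : ∀ a : Fin n → ZMod 2, (∏ i, (x i + (a i + 1))) = if x = a then 1 else 0 := by
      intro a
      by_cases h : x = a
      · subst h
        rw [if_pos rfl]
        apply Finset.prod_eq_one
        intro i _
        have : ∀ b : ZMod 2, b + (b + 1) = 1 := by decide
        exact this (x i)
      · rw [if_neg h]
        have : ∃ i, x i ≠ a i := by
          by_contra hc
          push_neg at hc
          exact h (funext hc)
        obtain ⟨i, hi⟩ := this
        apply Finset.prod_eq_zero (Finset.mem_univ i)
        have : ∀ b c : ZMod 2, b ≠ c → b + (c + 1) = 0 := by decide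
        exact this _ _ hi
    simp only [map_sum, map_mul, eval_C, map_prod, map_add, eval_X]
    rw [Finset.sum_congr rfl (fun a _ => by rw [key a])]
    simp [Finset.sum_ite_eq']
  · apply le_trans (totalDegree_finset_sum _ _)
    apply Finset.sup_le
    intro a _
    apply le_trans (totalDegree_mul _ _)
    rw [totalDegree_C, zero_add]
    apply le_trans (totalDegree_finset_prod _ _)
    calc ∑ i : Fin n, ((X i + C (a i + 1)).totalDegree) ≤ ∑ _i : Fin n, 1 := by
          apply Finset.sum_le_sum
          intro i _
          refine le_trans (totalDegree_add _ _) (max_le ?_ ?_)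
          · exact (totalDegree_X i).le
          · exact le_trans (totalDegree_C _).le (Nat.zero_le 1)
      _ = n := by simp

open MvPolynomial in
lemma BF.degB_spec {n : ℕ} (f : BF n) :
    ∃ p : MvPolynomial (Fin n) (ZMod 2),
      (∀ x, eval x p = f x) ∧ p.totalDegree ≤ degB f := by
  have hne : {d | ∃ p : MvPolynomial (Fin n) (ZMod 2),
      (∀ x, MvPolynomial.eval x p = f x) ∧ p.totalDegree ≤ d}.Nonempty := by
    obtain ⟨p, h1, h2⟩ := BF.exists_repr f
    exact ⟨n, p, h1, h2⟩
  exact Nat.sInf_mem hne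

lemma BF.degB_le_n {n : ℕ} (f : BF n) : degB f ≤ n := by
  obtain ⟨p, h1, h2⟩ := BF.exists_repr f
  exact Nat.sInf_le ⟨p, h1, h2⟩

open MvPolynomial in
lemma BF.degB_mul_le {n : ℕ} (u v : BF n) :
    degB (fun x => u x * v x) ≤ degB u + degB v := by
  obtain ⟨p, hp, hpd⟩ := BF.degB_spec u
  obtain ⟨q, hq, hqd⟩ := BF.degB_spec v
  refine Nat.sInf_le ⟨p * q, fun x => by simp [hp x, hq x], ?_⟩
  exact le_trans (totalDegree_mul p q) (add_le_add hpd hqd)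

open MvPolynomial in
lemma BF.degB_Xi {n : ℕ} (i : Fin n) : degB (fun x : Fin n → ZMod 2 => x i) ≤ 1 :=
  Nat.sInf_le ⟨X i, fun x => by simp, le_of_eq (totalDegree_X i)⟩

open MvPolynomial in
lemma BF.degB_pos {n : ℕ} (g : BF n) (h0 : g ≠ 0) (h1 : g ≠ 1) : 1 ≤ degB g := by
  by_contra hc
  push_neg at hc
  have h : degB g = 0 := Nat.lt_one_iff.mp hc
  obtain ⟨p, hp, hpd⟩ := BF.degB_spec g
  rw [h, Nat.le_zero] at hpd
  have hsupp := (totalDegree_eq_zero_iff _ p).mp hpd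
  have hconst : ∀ x, g x = g 0 := by
    intro x
    rw [← hp x, ← hp 0, eval_eq' x p, eval_eq' (0 : Fin n → ZMod 2) p]
    apply Finset.sum_congr rfl
    intro d hd
    have hd0 : ∀ i, d i = 0 := fun i => hsupp d hd i
    simp [hd0]
  rcases (by decide : ∀ c : ZMod 2, c = 0 ∨ c = 1) (g 0) with hc0 | hc1
  · exact h0 (funext fun x => by rw [hconst x, hc0]; rfl)
  · exact h1 (funext fun x => by rw [hconst x, hc1]; rfl)

open MvPolynomial in
lemma BF.sum_eval_eq_zero {n : ℕ} (p : MvPolynomial (Fin n) (ZMod 2))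
    (hp : p.totalDegree < n) : ∑ x : Fin n → ZMod 2, eval x p = 0 := by
  have : ∀ x, eval x p = ∑ d ∈ p.support, coeff d p * ∏ i, x i ^ d i := fun x => eval_eq' x p
  simp only [this]
  rw [Finset.sum_comm]
  apply Finset.sum_eq_zero
  intro d hd
  rw [← Finset.mul_sum]
  have hswap : ∑ x : Fin n → ZMod 2, ∏ i, x i ^ d i
      = ∏ i, ∑ b : ZMod 2, b ^ d i := (Fintype.prod_sum _).symm
  rw [hswap]
  have hex : ∃ i, d i = 0 := by
    by_contra hc
    push_neg at hc
    have h1 : ∀ i, 1 ≤ d i := fun i => Nat.one_le_iff_ne_zero.mpr (hc i)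
    have hn : n ≤ ∑ i, d i := by
      calc n = ∑ _i : Fin n, 1 := by simp
        _ ≤ ∑ i, d i := Finset.sum_le_sum (fun i _ => h1 i)
    have hdeg : (∑ i, d i) ≤ p.totalDegree := by
      have := MvPolynomial.le_totalDegree hd
      rwa [Finsupp.sum_fintype] at this
      intro; rfl
    omega
  obtain ⟨i, hi⟩ := hex
  rw [Finset.prod_eq_zero (Finset.mem_univ i), mul_zero]
  rw [hi]
  decide

lemma BF.degB_ge_of_odd {n : ℕ} (u : BF n) (h : ∑ x : Fin n → ZMod 2, u x = 1) :
    n ≤ degB u := by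
  by_contra hc
  push_neg at hc
  obtain ⟨p, hp, hpd⟩ := BF.degB_spec u
  have hz := BF.sum_eval_eq_zero p (lt_of_le_of_lt hpd hc)
  rw [Finset.sum_congr rfl (fun x _ => hp x)] at hz
  rw [h] at hz
  exact one_ne_zero hz

lemma BF.FAI_step {n : ℕ} (f : BF n) (hf : f ≠ delta0)
    (hfc : f + delta0 ≠ delta0) : FAI (f + delta0) ≤ FAI f + 2 := by
  have hd00 : (delta0 : BF n) 0 = 1 := by simp [delta0]
  have hf0 : f ≠ 0 := by
    intro h
    exact hfc (by rw [h, zero_add])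
  -- the defining set of FAI f is nonempty
  have hne : {m | ∃ g : BF n, g ≠ 1 ∧ f * g ≠ 0 ∧ m = degB g + degB (f * g)}.Nonempty := by
    by_cases hf1 : f = 1
    · refine ⟨degB (delta0 : BF n) + degB (f * delta0), delta0, ?_, ?_, rfl⟩
      · intro h; exact hf (hf1.trans h.symm)
      · intro h
        have := congrFun h 0
        rw [Pi.mul_apply, hf1, hd00] at this
        simp at this
    · refine ⟨degB f + degB (f * f), f, hf1, ?_, rfl⟩
      have hff : f * f = f := by
        funext x
        rw [Pi.mul_apply]
        exact (by decide : ∀ b : ZMod 2, b * b = b) (f x)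
      rw [hff]; exact hf0
  obtain ⟨g, hg1, hg0, hgm⟩ := Nat.sInf_mem hne
  have hv1 : ∀ v : ZMod 2, v ≠ 0 → v = 1 := by decide
  by_cases H : ∃ a, a ≠ 0 ∧ (f * g) a = 1
  · obtain ⟨a, ha0, hfa⟩ := H
    have hai : ∃ i, a i ≠ 0 := by
      by_contra hc
      push_neg at hc
      exact ha0 (funext fun i => hc i)
    obtain ⟨i, hi⟩ := hai
    have hai1 : a i = 1 := hv1 _ hi
    set h : BF n := fun x => g x * x i with hhdef
    have hid : (f + delta0) * h = fun x => (f x * g x) * x i := by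
      funext x
      rw [Pi.mul_apply, Pi.add_apply]
      by_cases hx : x = 0
      · subst hx
        simp [hhdef]
      · simp [delta0, hx]
        ring
    have hmem : FAI (f + delta0) ≤ degB h + degB ((f + delta0) * h) := by
      apply Nat.sInf_le
      refine ⟨h, ?_, ?_, rfl⟩
      · intro he
        have := congrFun he 0
        simp [hhdef] at this
      · rw [hid]
        intro he
        have := congrFun he a
        have hfa' : f a * g a = 1 := hfa
        rw [hfa', hai1] at this
        simp at this
    have hdh : degB h ≤ degB g + 1 :=
      le_trans (BF.degB_mul_le g (fun x => x i))
        (add_le_add_right (BF.degB_Xi i) _)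
    have hdfh : degB ((f + delta0) * h) ≤ degB (f * g) + 1 := by
      rw [hid]
      exact le_trans (BF.degB_mul_le (f * g) (fun x => x i))
        (add_le_add_right (BF.degB_Xi i) _)
    have hFAI : FAI f = degB g + degB (f * g) := hgm
    rw [hFAI]
    linarith
  · push_neg at H
    have hfgz : ∀ a, a ≠ 0 → (f * g) a = 0 := by
      intro a ha
      rcases (by decide : ∀ c : ZMod 2, c = 0 ∨ c = 1) ((f * g) a) with h | h
      · exact h
      · exact absurd h (H a ha)
    have hfg0 : (f * g) 0 = 1 := by
      rcases (by decide : ∀ c : ZMod 2, c = 0 ∨ c = 1) ((f * g) 0) with h | h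
      · exfalso
        apply hg0
        funext a
        by_cases ha : a = 0
        · rw [ha]; exact h
        · exact hfgz a ha
      · exact h
    have hsum : ∑ x : Fin n → ZMod 2, (f * g) x = 1 := by
      rw [Finset.sum_eq_single_of_mem 0 (Finset.mem_univ _)
        (fun b _ hb => hfgz b hb)]
      exact hfg0
    have hdeg : n ≤ degB (f * g) := BF.degB_ge_of_odd _ hsum
    have hgpos : 1 ≤ degB g := by
      apply BF.degB_pos g _ hg1
      intro h0
      exact hg0 (by rw [h0, mul_zero])
    have hf01 : f 0 = 1 := by
      have : f 0 * g 0 = 1 := hfg0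
      rcases (by decide : ∀ c : ZMod 2, c = 0 ∨ c = 1) (f 0) with h | h
      · rw [h, zero_mul] at this; exact absurd this (by decide)
      · exact h
    have hfc0 : (f + delta0 : BF n) 0 = 0 := by
      rw [Pi.add_apply, hf01, hd00]
      decide
    have hfcne : f + delta0 ≠ 0 := by
      intro h
      apply hf
      funext x
      have := congrFun h x
      rw [Pi.add_apply] at this
      have h2 : ∀ b c : ZMod 2, b + c = 0 → b = c := by decide
      exact h2 _ _ this
    have hexa : ∃ a, (f + delta0 : BF n) a = 1 := by
      by_contra hc
      push_neg at hc
      apply hfcne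
      funext a
      rcases (by decide : ∀ c : ZMod 2, c = 0 ∨ c = 1) ((f + delta0 : BF n) a) with h | h
      · exact h
      · exact absurd h (hc a)
    obtain ⟨a, ha1⟩ := hexa
    have ha0 : a ≠ 0 := by
      intro h
      rw [h, hfc0] at ha1
      exact absurd ha1 (by decide)
    have hai : ∃ i, a i ≠ 0 := by
      by_contra hc
      push_neg at hc
      exact ha0 (funext fun i => hc i)
    obtain ⟨i, hi⟩ := hai
    have hai1 : a i = 1 := hv1 _ hi
    have hmem : FAI (f + delta0) ≤ degB (fun x : Fin n → ZMod 2 => x i)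
        + degB ((f + delta0) * (fun x : Fin n → ZMod 2 => x i)) := by
      apply Nat.sInf_le
      refine ⟨fun x => x i, ?_, ?_, rfl⟩
      · intro he
        have := congrFun he 0
        simp at this
      · intro he
        have := congrFun he a
        rw [Pi.mul_apply, ha1, hai1] at this
        simp at this
    have hb1 : degB (fun x : Fin n → ZMod 2 => x i) ≤ 1 := BF.degB_Xi i
    have hb2 : degB ((f + delta0) * (fun x : Fin n → ZMod 2 => x i)) ≤ n :=
      BF.degB_le_n _
    have hFAI : FAI f = degB g + degB (f * g) := hgm
    rw [hFAI]
    linarith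

theorem stmt10 {n : ℕ} (f : BF n) (hf : f ≠ delta0)
    (hfc : f + delta0 ≠ delta0) :
    |(FAI (f + delta0) : ℤ) - (FAI f : ℤ)| ≤ 2 := by
  have h1 := BF.FAI_step f hf hfc
  have hdd : (delta0 : BF n) + delta0 = 0 := by
    funext x
    rw [Pi.add_apply]
    exact (by decide : ∀ b : ZMod 2, b + b = 0) _
  have hself : f + delta0 + delta0 = f := by
    rw [add_assoc, hdd, add_zero]
  have h2 : FAI (f + delta0 + delta0) ≤ FAI (f + delta0) + 2 := by
    apply BF.FAI_step (f + delta0) hfc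
    rw [hself]; exact hf
  rw [hself] at h2
  rw [abs_le]
  constructor
  · have : (FAI f : ℤ) ≤ (FAI (f + delta0) : ℤ) + 2 := by exact_mod_cast h2
    linarith
  · have : (FAI (f + delta0) : ℤ) ≤ (FAI f : ℤ) + 2 := by exact_mod_cast h1
    linarith
end

section
/- Let f be an (n−1)-variable Boolean function and let f̄(x_1,…,x_n) = x_n + f(x_1,…,x_{n−1}). Then FAI𝒞(f) ≤ FAI𝒞(f̄) ≤ FAI𝒞(f) + 2, where FAI𝒞(h) := min(FAI(h), FAI(1+h)). -/
open scoped BigOperators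

noncomputable def FAIc {n : ℕ} (h : BF n) : ℕ := min (FAI h) (FAI (1 + h))

namespace FAIAux
open MvPolynomial

lemma z2 (a : ZMod 2) : a = 0 ∨ a = 1 := by revert a; decide

lemma z2pow (a : ZMod 2) (k : ℕ) : a ^ min k 1 = a ^ k := by
  rcases Nat.eq_zero_or_pos k with hk | hk
  · simp [hk]
  · rw [show min k 1 = 1 by omega, pow_one]
    rcases z2 a with h | h <;> subst h
    · rw [zero_pow (by omega)]
    · rw [one_pow]

variable {n : ℕ}

def ML (p : MvPolynomial (Fin n) (ZMod 2)) : Prop :=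
  p ∈ restrictDegree (Fin n) (ZMod 2) 1

lemma ml_iff (p : MvPolynomial (Fin n) (ZMod 2)) :
    ML p ↔ ∀ s ∈ p.support, ∀ i, (s : Fin n →₀ ℕ) i ≤ 1 := by
  unfold ML; rw [mem_restrictDegree]

lemma card2 : Fintype.card (ZMod 2) - 1 = 1 := by rw [ZMod.card]

lemma ml_unique {p q : MvPolynomial (Fin n) (ZMod 2)} (hp : ML p) (hq : ML q)
    (h : ∀ x : Fin n → ZMod 2, eval x p = eval x q) : p = q := by
  have h0 := eq_zero_of_eval_eq_zero (Fin n) (ZMod 2) (p - q)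
    (fun v => by rw [map_sub, h v, sub_self]) (by rw [card2]; exact Submodule.sub_mem _ hp hq)
  exact sub_eq_zero.mp h0

lemma exists_ml_repr (f : BF n) : ∃ p, ML p ∧ ∀ x, eval x p = f x := by
  have htop := map_restrict_dom_evalₗ (ZMod 2) (Fin n)
  have hf : f ∈ Submodule.map (evalₗ (ZMod 2) (Fin n))
      (restrictDegree (Fin n) (ZMod 2) (Fintype.card (ZMod 2) - 1)) := by
    rw [htop]; trivial
  obtain ⟨p, hp, hev⟩ := hf
  refine ⟨p, ?_, fun x => ?_⟩
  · rwa [card2] at hp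
  · rw [← hev]; rfl

noncomputable def anf (f : BF n) : MvPolynomial (Fin n) (ZMod 2) :=
  (exists_ml_repr f).choose

lemma anf_ml (f : BF n) : ML (anf f) := (exists_ml_repr f).choose_spec.1

lemma anf_eval (f : BF n) (x : Fin n → ZMod 2) : eval x (anf f) = f x :=
  (exists_ml_repr f).choose_spec.2 x

/-- multilinear reduction -/
noncomputable def red (d : Fin n →₀ ℕ) : Fin n →₀ ℕ :=
  d.mapRange (fun k => min k 1) rfl

lemma red_apply (d : Fin n →₀ ℕ) (i : Fin n) : red d i = min (d i) 1 :=
  Finsupp.mapRange_apply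

noncomputable def reduce (p : MvPolynomial (Fin n) (ZMod 2)) : MvPolynomial (Fin n) (ZMod 2) :=
  ∑ d ∈ p.support, monomial (red d) (coeff d p)

lemma reduce_eval (p : MvPolynomial (Fin n) (ZMod 2)) (x : Fin n → ZMod 2) :
    eval x (reduce p) = eval x p := by
  conv_rhs => rw [← support_sum_monomial_coeff p]
  rw [reduce, map_sum, map_sum]
  refine Finset.sum_congr rfl fun d _ => ?_
  rw [eval_monomial, eval_monomial]
  congr 1
  rw [red, Finsupp.prod_mapRange_index (fun a => pow_zero _)]
  exact Finsupp.prod_congr fun i _ => z2pow _ _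

lemma reduce_ml (p : MvPolynomial (Fin n) (ZMod 2)) : ML (reduce p) := by
  refine Submodule.sum_mem _ fun d _ => ?_
  rw [mem_restrictDegree]
  intro s hs i
  classical
  rw [support_monomial] at hs
  split_ifs at hs with h
  · exact absurd hs (Finset.notMem_empty s)
  · rw [Finset.mem_singleton] at hs
    subst hs
    rw [red_apply]
    exact min_le_right _ _

lemma reduce_totalDegree_le (p : MvPolynomial (Fin n) (ZMod 2)) :
    (reduce p).totalDegree ≤ p.totalDegree := by
  refine (totalDegree_finset_sum _ _).trans (Finset.sup_le fun d hd => ?_)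
  refine (totalDegree_monomial_le _ _).trans ?_
  refine le_trans ?_ (le_totalDegree hd)
  rw [Finsupp.sum, Finsupp.sum]
  refine le_trans (Finset.sum_le_sum (fun i _ => ?_)) (Finset.sum_le_sum_of_subset ?_)
  · exact (red_apply d i).trans_le (min_le_left _ _)
  · exact Finsupp.support_mapRange

lemma degB_le_of_repr {f : BF n} {p : MvPolynomial (Fin n) (ZMod 2)}
    (h : ∀ x, eval x p = f x) : degB f ≤ p.totalDegree :=
  Nat.sInf_le ⟨p, h, le_rfl⟩

lemma degB_eq_of_ml {f : BF n} {p : MvPolynomial (Fin n) (ZMod 2)} (hml : ML p)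
    (h : ∀ x, eval x p = f x) : degB f = p.totalDegree := by
  refine le_antisymm (degB_le_of_repr h) ?_
  refine le_csInf ⟨p.totalDegree, p, h, le_rfl⟩ ?_
  rintro d ⟨q, hq, hqd⟩
  have : p = reduce q := ml_unique hml (reduce_ml q)
    (fun x => by rw [h x, reduce_eval, hq])
  rw [this]
  exact (reduce_totalDegree_le q).trans hqd

lemma degB_anf (f : BF n) : degB f = (anf f).totalDegree :=
  degB_eq_of_ml (anf_ml f) (anf_eval f)

lemma degB_mul_le (f g : BF n) : degB (f * g) ≤ degB f + degB g := by
  refine le_trans (degB_le_of_repr (p := anf f * anf g) ?_) ?_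
  · intro x; rw [map_mul, anf_eval, anf_eval]; rfl
  · rw [degB_anf f, degB_anf g]; exact totalDegree_mul _ _

lemma degB_add_le (f g : BF n) : degB (f + g) ≤ max (degB f) (degB g) := by
  refine le_trans (degB_le_of_repr (p := anf f + anf g) ?_) ?_
  · intro x; rw [map_add, anf_eval, anf_eval]; rfl
  · rw [degB_anf f, degB_anf g]; exact totalDegree_add _ _

lemma degB_const (c : ZMod 2) : degB (fun _ : Fin n → ZMod 2 => c) = 0 :=
  Nat.le_zero.mp (le_trans (degB_le_of_repr (p := C c) (fun x => eval_C c))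
    (by rw [totalDegree_C]))

lemma degB_add_le' (f g : BF n) (hf : degB f = 0) : degB (f + g) ≤ degB g :=
  le_trans (degB_add_le f g) (by omega)

lemma one_le_degB_of_ne {f : BF n} {x y : Fin n → ZMod 2} (h : f x ≠ f y) : 1 ≤ degB f := by
  by_contra hc
  have h0 : (anf f).totalDegree = 0 := by rw [← degB_anf]; omega
  rw [totalDegree_eq_zero_iff] at h0
  have hev : ∀ z : Fin n → ZMod 2, eval z (anf f) = ∑ d ∈ (anf f).support, coeff d (anf f) := by
    intro z
    rw [eval_eq]
    refine Finset.sum_congr rfl fun d hd => ?_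
    have : d.support = ∅ := by
      rw [Finsupp.support_eq_empty]
      ext i; exact h0 d hd i
    rw [this, Finset.prod_empty, mul_one]
  exact h (by rw [← anf_eval f x, ← anf_eval f y, hev, hev])



lemma totalDegree_eval₂_le (g : Fin (n+1) → MvPolynomial (Fin n) (ZMod 2))
    (hg : ∀ i, (g i).totalDegree ≤ 1) (p : MvPolynomial (Fin (n+1)) (ZMod 2)) :
    (eval₂ C g p).totalDegree ≤ p.totalDegree := by
  rw [eval₂_eq]
  refine (totalDegree_finset_sum _ _).trans (Finset.sup_le fun d hd => ?_)
  refine (totalDegree_mul _ _).trans ?_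
  rw [totalDegree_C, zero_add]
  refine (totalDegree_finset_prod _ _).trans ?_
  have h1 : ∑ i ∈ d.support, (g i ^ d i).totalDegree ≤ ∑ i ∈ d.support, d i := by
    refine Finset.sum_le_sum fun i _ => (totalDegree_pow _ _).trans ?_
    simpa using Nat.mul_le_mul_left (d i) (hg i)
  exact h1.trans (le_totalDegree hd)

lemma degB_restrict_le (G : BF (n+1)) (c : ZMod 2) :
    degB (fun x : Fin n → ZMod 2 => G (Fin.snoc x c)) ≤ degB G := by
  set g : Fin (n+1) → MvPolynomial (Fin n) (ZMod 2) := Fin.snoc (fun j => X j) (C c) with hg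
  refine le_trans (degB_le_of_repr (p := eval₂ C g (anf G)) ?_) ?_
  · intro x
    rw [eval_eval₂]
    have h1 : ((eval x).comp (C : ZMod 2 →+* MvPolynomial (Fin n) (ZMod 2)))
        = RingHom.id (ZMod 2) := RingHom.ext fun a => eval_C a
    have h2 : (fun s => eval x (g s)) = Fin.snoc x c := by
      funext s
      refine Fin.lastCases ?_ (fun j => ?_) s
      · rw [hg, Fin.snoc_last, Fin.snoc_last, eval_C]
      · rw [hg, Fin.snoc_castSucc, Fin.snoc_castSucc, eval_X]
    rw [h1, h2, ← anf_eval G (Fin.snoc x c)]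
    rfl
  · rw [degB_anf]
    refine totalDegree_eval₂_le _ (fun i => ?_) _
    refine Fin.lastCases ?_ (fun j => ?_) i
    · rw [hg, Fin.snoc_last, totalDegree_C]; omega
    · rw [hg, Fin.snoc_castSucc, totalDegree_X]

lemma degB_lift_le (f : BF n) :
    degB (fun x : Fin (n+1) → ZMod 2 => f (fun i => x i.castSucc)) ≤ degB f := by
  refine le_trans (degB_le_of_repr (p := rename Fin.castSucc (anf f)) ?_) ?_
  · intro x; rw [eval_rename, ← anf_eval f]; rfl
  · rw [degB_anf]; exact totalDegree_rename_le _ _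

lemma support_rename_castSucc {h : BF n} {s : Fin (n+1) →₀ ℕ}
    (hs : s ∈ (rename Fin.castSucc (anf h)).support) :
    s (Fin.last n) = 0 ∧ ∀ i, s i ≤ 1 := by
  rw [mem_support_iff] at hs
  obtain ⟨u, hu, hcu⟩ := coeff_rename_ne_zero _ _ _ hs
  subst hu
  constructor
  · refine Finsupp.mapDomain_notin_range _ _ ?_
    rintro ⟨j, hj⟩
    exact (Fin.castSucc_lt_last j).ne hj
  · intro i
    refine Fin.lastCases ?_ (fun j => ?_) i
    · rw [Finsupp.mapDomain_notin_range]
      · omega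
      · rintro ⟨j, hj⟩; exact (Fin.castSucc_lt_last j).ne hj
    · rw [Finsupp.mapDomain_apply (Fin.castSucc_injective n)]
      have := (ml_iff _).mp (anf_ml h)
      exact this u (mem_support_iff.mpr hcu) j

/-- The key exact-degree lower bound: multiplying a lift by an affine function
of the new variable increases the degree. -/
lemma degB_lin_mul (h : BF n) (hh : h ≠ 0) (c : ZMod 2) :
    degB h + 1 ≤ degB (fun z : Fin (n+1) → ZMod 2 =>
      (c + z (Fin.last n)) * h (fun i => z i.castSucc)) := by
  classical
  set q : MvPolynomial (Fin (n+1)) (ZMod 2) := rename Fin.castSucc (anf h) with hqdef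
  set p : MvPolynomial (Fin (n+1)) (ZMod 2) := (C c + X (Fin.last n)) * q with hpdef
  have hq0 : ∀ s ∈ q.support, s (Fin.last n) = 0 ∧ ∀ i, s i ≤ 1 :=
    fun s hs => support_rename_castSucc hs
  have hml : ML p := by
    rw [hpdef, add_mul]
    refine Submodule.add_mem _ ?_ ?_
    · rw [← MvPolynomial.smul_eq_C_mul]
      refine Submodule.smul_mem _ _ ?_
      rw [mem_restrictDegree]
      exact fun s hs i => (hq0 s hs).2 i
    · rw [mem_restrictDegree]
      intro s hs i
      have := support_mul (X (Fin.last n)) q hs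
      rw [Finset.mem_add] at this
      obtain ⟨a, ha, b, hb, hab⟩ := this
      rw [support_X, Finset.mem_singleton] at ha
      subst ha hab
      rw [Finsupp.add_apply]
      refine Fin.lastCases ?_ (fun j => ?_) i
      · rw [(hq0 b hb).1, Finsupp.single_eq_same]
      · rw [Finsupp.single_eq_of_ne' (Fin.castSucc_lt_last j).ne']
        simpa using (hq0 b hb).2 j.castSucc
  have hrepr : ∀ z : Fin (n+1) → ZMod 2,
      eval z p = (c + z (Fin.last n)) * h (fun i => z i.castSucc) := by
    intro z
    rw [hpdef, map_mul, map_add, eval_C, eval_X, hqdef, eval_rename, ← anf_eval h]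
    rfl
  rw [degB_eq_of_ml hml hrepr]
  -- pick top monomial of anf h
  have hanf : anf h ≠ 0 := by
    intro h0
    refine hh (funext fun x => ?_)
    rw [← anf_eval h x, h0, map_zero]; rfl
  obtain ⟨d, hd, hdeq⟩ := Finset.exists_mem_eq_sup (anf h).support
    (support_nonempty.mpr hanf) (fun s => s.sum fun _ e => e)
  set e : Fin (n+1) →₀ ℕ := Finsupp.single (Fin.last n) 1 + Finsupp.mapDomain Fin.castSucc d
    with hedef
  have hcoeffq : coeff (Finsupp.mapDomain Fin.castSucc d) q = coeff d (anf h) :=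
    coeff_rename_mapDomain _ (Fin.castSucc_injective n) _ _
  have hcd : coeff d (anf h) ≠ 0 := mem_support_iff.mp hd
  have hce : coeff e p ≠ 0 := by
    rw [hpdef, add_mul, coeff_add, hedef, coeff_X_mul, hcoeffq, coeff_C_mul]
    have : coeff (Finsupp.single (Fin.last n) 1 + Finsupp.mapDomain Fin.castSucc d) q = 0 := by
      by_contra hne
      have := (hq0 _ (mem_support_iff.mpr hne)).1
      rw [Finsupp.add_apply, Finsupp.single_eq_same] at this
      omega
    rw [this, mul_zero, zero_add]
    exact hcd
  have hesum : (e.sum fun _ k => k) = (d.sum fun _ k => k) + 1 := by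
    rw [hedef, Finsupp.sum_add_index' (fun _ => rfl) (fun _ _ _ => rfl),
      Finsupp.sum_single_index rfl,
      Finsupp.sum_mapDomain_index (fun _ => rfl) (fun _ _ _ => rfl)]
    omega
  have hle := le_totalDegree (mem_support_iff.mpr hce)
  rw [hesum] at hle
  have hdeq' : (anf h).totalDegree = d.sum fun _ e => e := hdeq
  rw [degB_anf]
  omega


end FAIAux

namespace FAIAux
open MvPolynomial

variable {n : ℕ}

-- ZMod 2 helpers
lemma z2add (a : ZMod 2) : a + a = 0 := by revert a; decide
lemma z2sq (a : ZMod 2) : a * a = a := by revert a; decide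
lemma z2oneadd (a : ZMod 2) : 1 + (1 + a) = a := by revert a; decide
lemma z2h1 (a : ZMod 2) : 1 + a = 1 → a = 0 := by revert a; decide
lemma z2h2 (a : ZMod 2) : 1 + a = 0 → a = 1 := by revert a; decide
lemma z2h3 (a : ZMod 2) : a + 1 = 1 → a = 0 := by revert a; decide
lemma z2h4 (a : ZMod 2) : (a + 1) + a + 1 = 0 := by revert a; decide
lemma z2h5 (a : ZMod 2) : (1 + a) + a = 1 := by revert a; decide
lemma z2two : (1 : ZMod 2) + 1 = 0 := by decide

lemma FAI_le (h g : BF n) (hg1 : g ≠ 1) (hg0 : h * g ≠ 0) :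
    FAI h ≤ degB g + degB (h * g) := Nat.sInf_le ⟨g, hg1, hg0, rfl⟩

lemma FAI_zero : FAI (0 : BF n) = 0 := by
  unfold FAI
  convert Nat.sInf_empty
  rw [Set.eq_empty_iff_forall_notMem]
  rintro k ⟨g, -, hg0, -⟩
  exact hg0 (zero_mul g)

lemma FAIc_le_FAI (h : BF n) : FAIc h ≤ FAI h := by unfold FAIc; exact min_le_left _ _
lemma FAIc_le_FAI' (h : BF n) : FAIc h ≤ FAI (1 + h) := by unfold FAIc; exact min_le_right _ _

lemma one_add_one_add (f : BF n) : (1 : BF n) + (1 + f) = f :=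
  funext fun x => z2oneadd (f x)

lemma FAIc_one_add (f : BF n) : FAIc (1 + f) = FAIc f := by
  unfold FAIc
  rw [one_add_one_add]
  exact min_comm _ _

variable {m : ℕ}

def bar (f : BF m) : BF (m + 1) :=
  fun x => x (Fin.last m) + f (fun i => x i.castSucc)

lemma bar_snoc (f : BF m) (x : Fin m → ZMod 2) (c : ZMod 2) :
    bar f (Fin.snoc x c) = c + f x := by
  simp [bar, Fin.snoc_last, Fin.snoc_castSucc]

lemma bar_one_add (f : BF m) : bar (1 + f) = 1 + bar f := by
  funext z
  show z (Fin.last m) + (1 + f _) = 1 + (z (Fin.last m) + f _)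
  ring

lemma apply_restrict (F : BF (m + 1)) {z : Fin (m + 1) → ZMod 2} (c : ZMod 2)
    (h : z (Fin.last m) = c) :
    F z = F (Fin.snoc (fun i => z i.castSucc) c) := by
  conv_lhs => rw [← Fin.snoc_init_self z]
  rw [h]
  rfl

lemma FAI_le_affine (h : BF m) (h0 : h ≠ 0) (h1 : h ≠ 1) : FAI h ≤ degB h + 2 := by
  obtain ⟨xs, hxs⟩ : ∃ x, h x = 1 := by
    by_contra hc; push_neg at hc
    refine h0 (funext fun x => ?_)
    rcases z2 (h x) with e | e
    · exact e
    · exact absurd e (hc x)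
  obtain ⟨xt, hxt⟩ : ∃ x, h x = 0 := by
    by_contra hc; push_neg at hc
    refine h1 (funext fun x => ?_)
    rcases z2 (h x) with e | e
    · exact absurd e (hc x)
    · exact e
  have hm : m ≠ 0 := by
    rintro rfl
    have hxx : xs = xt := funext fun i => i.elim0
    rw [hxx, hxt] at hxs
    exact (by decide : (0 : ZMod 2) ≠ 1) hxs
  have i : Fin m := ⟨0, Nat.pos_of_ne_zero hm⟩
  classical
  set g : BF m := fun x => x i + xs i + 1 with hg
  have hgxs : g xs = 1 := by
    show xs i + xs i + 1 = 1
    rw [z2add, zero_add]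
  have hgne1 : g ≠ 1 := by
    intro hh
    have h2 := congrFun hh (Function.update xs i (xs i + 1))
    have h3 : (Function.update xs i (xs i + 1)) i = xs i + 1 := Function.update_self i _ xs
    rw [show g (Function.update xs i (xs i + 1)) =
        (Function.update xs i (xs i + 1)) i + xs i + 1 from rfl, h3] at h2
    rw [z2h4 (xs i)] at h2
    exact (by decide : (0 : ZMod 2) ≠ 1) (h2.trans rfl)
  have hmul_ne : h * g ≠ 0 := by
    intro hh
    have h2 := congrFun hh xs
    rw [show (h * g) xs = h xs * g xs from rfl, hxs, hgxs, mul_one] at h2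
    exact (by decide : (1 : ZMod 2) ≠ 0) (h2.trans rfl)
  have hdg : degB g ≤ 1 := by
    refine le_trans (degB_le_of_repr (p := X i + C (xs i + 1)) ?_) ?_
    · intro x
      rw [map_add, eval_X, eval_C]
      show _ = x i + xs i + 1
      ring
    · refine (totalDegree_add _ _).trans ?_
      rw [totalDegree_X, totalDegree_C]
      omega
  have hmul := degB_mul_le h g
  have := FAI_le h g hgne1 hmul_ne
  omega

lemma degB_Xlast : degB (fun z : Fin (m + 1) → ZMod 2 => z (Fin.last m)) ≤ 1 := by
  refine le_trans (degB_le_of_repr (p := X (Fin.last m)) fun x => eval_X ..) ?_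
  rw [totalDegree_X]

lemma degB_E (c : ZMod 2) : degB (fun z : Fin (m + 1) → ZMod 2 => c + z (Fin.last m)) ≤ 1 := by
  refine le_trans (degB_le_of_repr (p := C c + X (Fin.last m)) ?_) ?_
  · intro x; rw [map_add, eval_X, eval_C]
  · refine (totalDegree_add _ _).trans ?_
    rw [totalDegree_X, totalDegree_C]
    omega

lemma upper (f : BF m) : FAI (bar f) ≤ FAI f + 2 := by
  classical
  set x0 : Fin m → ZMod 2 := fun _ => 0 with hx0
  by_cases hS : ∃ g : BF m, g ≠ 1 ∧ f * g ≠ 0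
  · obtain ⟨g0, hg01, hg00⟩ := hS
    have hSne : {k | ∃ g : BF m, g ≠ 1 ∧ f * g ≠ 0 ∧ k = degB g + degB (f * g)}.Nonempty :=
      ⟨_, g0, hg01, hg00, rfl⟩
    obtain ⟨g, hg1, hg0, hFAIeq⟩ := Nat.sInf_mem hSne
    have hFAIeq' : FAI f = degB g + degB (f * g) := hFAIeq
    set E : BF (m + 1) := fun z => 1 + z (Fin.last m) with hE
    set Lg : BF (m + 1) := fun z => g (fun i => z i.castSucc) with hLg
    set Gg : BF (m + 1) := E * Lg with hGg
    have hGgne1 : Gg ≠ 1 := by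
      intro hh
      have h2 := congrFun hh (Fin.snoc x0 1)
      rw [show Gg (Fin.snoc x0 1) = E (Fin.snoc x0 1) * Lg (Fin.snoc x0 1) from rfl] at h2
      rw [show E (Fin.snoc x0 1) = 1 + (Fin.snoc x0 1 : Fin (m+1) → ZMod 2) (Fin.last m) from rfl,
        Fin.snoc_last, z2two, zero_mul] at h2
      exact (by decide : (0 : ZMod 2) ≠ 1) (h2.trans rfl)
    have hprod : bar f * Gg = E * (fun z => (f * g) (fun i => z i.castSucc)) := by
      funext z
      show bar f z * (E z * Lg z) = E z * ((f * g) (fun i => z i.castSucc))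
      rw [show bar f z = z (Fin.last m) + f (fun i => z i.castSucc) from rfl,
        show E z = 1 + z (Fin.last m) from rfl,
        show Lg z = g (fun i => z i.castSucc) from rfl,
        show (f * g) (fun i => z i.castSucc)
          = f (fun i => z i.castSucc) * g (fun i => z i.castSucc) from rfl]
      rcases z2 (z (Fin.last m)) with h | h <;> rw [h]
      · ring
      · rw [z2two]; ring
    have hprodne : bar f * Gg ≠ 0 := by
      obtain ⟨xw, hxw⟩ := Function.ne_iff.mp hg0
      simp only [Pi.zero_apply] at hxw
      intro hh
      have h2 := congrFun hh (Fin.snoc xw 0)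
      rw [hprod] at h2
      simp only [Pi.mul_apply, Pi.zero_apply, hE, Fin.snoc_last, Fin.snoc_castSucc, add_zero,
        one_mul] at h2
      exact hxw h2
    have hdGg : degB Gg ≤ 1 + degB g :=
      le_trans (degB_mul_le E Lg) (Nat.add_le_add (degB_E 1) (degB_lift_le g))
    have hdprod : degB (bar f * Gg) ≤ 1 + degB (f * g) := by
      rw [hprod]
      exact le_trans (degB_mul_le E _) (Nat.add_le_add (degB_E 1) (degB_lift_le (f * g)))
    have := FAI_le (bar f) Gg hGgne1 hprodne
    omega
  · -- f is constant
    push_neg at hS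
    have hconst : f = 0 ∨ f = 1 := by
      by_cases h1 : f = 1
      · exact Or.inr h1
      · left
        have hsq : f * f = f := funext fun x => z2sq (f x)
        have h2 := hS f h1
        rwa [hsq] at h2
    have hdegf : degB f = 0 := by
      rcases hconst with rfl | rfl
      · exact degB_const 0
      · exact degB_const 1
    have hbar_sq : bar f * bar f = bar f := funext fun z => z2sq _
    have hbar_ne1 : bar f ≠ 1 := by
      intro hh
      have h2 := congrFun hh (Fin.snoc x0 (f x0))
      rw [bar_snoc, z2add] at h2
      exact (by decide : (0 : ZMod 2) ≠ 1) (h2.trans rfl)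
    have hbar_ne0 : bar f ≠ 0 := by
      intro hh
      have h2 := congrFun hh (Fin.snoc x0 (1 + f x0))
      rw [bar_snoc] at h2
      rw [show (1 + f x0) + f x0 = 1 from z2h5 (f x0)] at h2
      exact (by decide : (1 : ZMod 2) ≠ 0) (h2.trans rfl)
    have hdbar : degB (bar f) ≤ 1 := by
      have hsum : bar f = (fun z : Fin (m+1) → ZMod 2 => z (Fin.last m))
          + (fun z : Fin (m+1) → ZMod 2 => f (fun i => z i.castSucc)) := funext fun z => rfl
      rw [hsum]
      exact le_trans (degB_add_le _ _)
        (max_le degB_Xlast ((degB_lift_le f).trans (by rw [hdegf]; omega)))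
    have := FAI_le (bar f) (bar f) hbar_ne1 (by rw [hbar_sq]; exact hbar_ne0)
    rw [hbar_sq] at this
    omega


lemma lower (f : BF m) : FAIc f ≤ FAI (bar f) := by
  classical
  set x0 : Fin m → ZMod 2 := fun _ => 0 with hx0
  -- the defining set for FAI (bar f) is nonempty
  have hbar_ne1 : bar f ≠ 1 := by
    intro hh
    have h2 := congrFun hh (Fin.snoc x0 (f x0))
    rw [bar_snoc, z2add] at h2
    exact (by decide : (0 : ZMod 2) ≠ 1) (h2.trans rfl)
  have hbar_ne0 : bar f ≠ 0 := by
    intro hh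
    have h2 := congrFun hh (Fin.snoc x0 (1 + f x0))
    rw [bar_snoc, z2h5] at h2
    exact (by decide : (1 : ZMod 2) ≠ 0) (h2.trans rfl)
  have hbar_sq : bar f * bar f = bar f := funext fun z => z2sq _
  have hSne : {k | ∃ g : BF (m+1), g ≠ 1 ∧ bar f * g ≠ 0 ∧
      k = degB g + degB (bar f * g)}.Nonempty :=
    ⟨_, bar f, hbar_ne1, by rw [hbar_sq]; exact hbar_ne0, rfl⟩
  obtain ⟨G, hG1, hH, hFAIeq⟩ := Nat.sInf_mem hSne
  have hFAIeq' : FAI (bar f) = degB G + degB (bar f * G) := hFAIeq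
  set H : BF (m + 1) := bar f * G with hHdef
  set G0 : BF m := fun x => G (Fin.snoc x 0) with hG0
  set G1 : BF m := fun x => G (Fin.snoc x 1) with hG1'
  set H0 : BF m := fun x => H (Fin.snoc x 0) with hH0'
  set H1 : BF m := fun x => H (Fin.snoc x 1) with hH1'
  have hH0f : H0 = f * G0 := by
    funext x
    show H (Fin.snoc x 0) = f x * G0 x
    rw [hHdef]
    show bar f (Fin.snoc x 0) * G (Fin.snoc x 0) = _
    rw [bar_snoc, zero_add]
  have hH1f : H1 = (1 + f) * G1 := by
    funext x
    show H (Fin.snoc x 1) = (1 + f x) * G1 x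
    rw [hHdef]
    show bar f (Fin.snoc x 1) * G (Fin.snoc x 1) = _
    rw [bar_snoc]
  have dG0 : degB G0 ≤ degB G := degB_restrict_le G 0
  have dG1 : degB G1 ≤ degB G := degB_restrict_le G 1
  have dH0 : degB H0 ≤ degB H := degB_restrict_le H 0
  have dH1 : degB H1 ≤ degB H := degB_restrict_le H 1
  by_cases hA : H0 ≠ 0 ∧ G0 ≠ 1
  · refine le_trans (FAIc_le_FAI f) ?_
    have hle := FAI_le f G0 hA.2 (by rw [← hH0f]; exact hA.1)
    rw [hFAIeq', ← hH0f] at *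
    omega
  by_cases hB : H1 ≠ 0 ∧ G1 ≠ 1
  · refine le_trans (FAIc_le_FAI' f) ?_
    have hle := FAI_le (1 + f) G1 hB.2 (by rw [← hH1f]; exact hB.1)
    rw [hFAIeq', ← hH1f] at *
    omega
  push_neg at hA hB
  have hHor : H0 ≠ 0 ∨ H1 ≠ 0 := by
    by_contra hc
    push_neg at hc
    apply hH
    funext z
    show H z = 0
    rcases z2 (z (Fin.last m)) with h | h
    · rw [apply_restrict H 0 h]
      exact (congrFun hc.1 (fun i => z i.castSucc)).trans rfl
    · rw [apply_restrict H 1 h]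
      exact (congrFun hc.2 (fun i => z i.castSucc)).trans rfl
  rcases hHor with hH0ne | hH1ne
  · -- C branch : G0 = 1
    have hG0one : G0 = 1 := hA hH0ne
    have hH0eq : H0 = f := by rw [hH0f, hG0one, mul_one]
    have hG1ne1 : G1 ≠ 1 := by
      intro h1
      apply hG1
      funext z
      show G z = 1
      rcases z2 (z (Fin.last m)) with h | h
      · rw [apply_restrict G 0 h]
        exact (congrFun hG0one (fun i => z i.castSucc)).trans rfl
      · rw [apply_restrict G 1 h]
        exact (congrFun h1 (fun i => z i.castSucc)).trans rfl
    have hH1z : H1 = 0 := by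
      by_contra hne
      exact hG1ne1 (hB hne)
    by_cases hfone : f = 1
    · -- FAIc f = 0
      refine le_trans (FAIc_le_FAI' f) ?_
      have hzero : (1 : BF m) + f = 0 := by
        rw [hfone]
        funext x
        exact z2add 1
      rw [hzero, FAI_zero]
      exact Nat.zero_le _
    by_cases hG1z : G1 = 0
    · -- C3 : G = 1 + y
      have hfne0 : f ≠ 0 := by rw [← hH0eq]; exact hH0ne
      have hHform : H = fun z => (1 + z (Fin.last m)) * f (fun i => z i.castSucc) := by
        funext z
        rcases z2 (z (Fin.last m)) with h | h
        · rw [apply_restrict H 0 h, h]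
          have e1 : H (Fin.snoc (fun i => z i.castSucc) 0) = f (fun i => z i.castSucc) :=
            (congrFun hH0eq (fun i => z i.castSucc))
          rw [e1, add_zero, one_mul]
        · rw [apply_restrict H 1 h, h]
          have e1 : H (Fin.snoc (fun i => z i.castSucc) 1) = 0 :=
            (congrFun hH1z (fun i => z i.castSucc)).trans rfl
          rw [e1, z2two, zero_mul]
      have hdegH : degB f + 1 ≤ degB H := by
        rw [hHform]
        exact degB_lin_mul f hfne0 1
      have hdegG : 1 ≤ degB G := by
        refine one_le_degB_of_ne (x := Fin.snoc x0 0) (y := Fin.snoc x0 1) ?_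
        have e0 : G (Fin.snoc x0 0) = 1 := (congrFun hG0one x0).trans rfl
        have e1 : G (Fin.snoc x0 1) = 0 := (congrFun hG1z x0).trans rfl
        rw [e0, e1]
        decide
      have haff := FAI_le_affine f hfne0 hfone
      refine le_trans (FAIc_le_FAI f) (le_trans haff ?_)
      rw [hFAIeq']
      omega
    · -- C2
      have hΔne1 : (1 : BF m) + G1 ≠ 1 := by
        intro hh
        apply hG1z
        funext x
        exact z2h1 (G1 x) (congrFun hh x)
      have h1fne0 : (1 : BF m) + f ≠ 0 := by
        intro hh
        apply hfone
        funext x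
        exact z2h2 (f x) (congrFun hh x)
      have hmul : ((1 : BF m) + f) * ((1 : BF m) + G1) = (1 : BF m) + f := by
        funext x
        show (1 + f x) * (1 + G1 x) = 1 + f x
        have h1 : (1 + f x) * G1 x = 0 := by
          have h2 := congrFun hH1f x
          have h3 : H1 x = 0 := (congrFun hH1z x).trans rfl
          rw [h3] at h2
          exact h2.symm
        rw [mul_add, mul_one, h1, add_zero]
      have hle := FAI_le (1 + f) (1 + G1) hΔne1 (by rw [hmul]; exact h1fne0)
      have d1 : degB ((1 : BF m) + G1) ≤ degB G := by
        rw [show (1 : BF m) = G0 from hG0one.symm]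
        exact le_trans (degB_add_le G0 G1) (max_le dG0 dG1)
      have d2 : degB ((1 : BF m) + f) ≤ degB H := by
        refine le_trans (degB_add_le 1 f) ?_
        have e1 : degB (1 : BF m) = 0 := degB_const 1
        have e2 : degB f ≤ degB H := by rw [← hH0eq]; exact dH0
        rw [e1]
        omega
      rw [hmul] at hle
      refine le_trans (FAIc_le_FAI' f) (le_trans hle ?_)
      rw [hFAIeq']
      omega
  · -- D branch : G1 = 1
    have hG1one : G1 = 1 := hB hH1ne
    have hH1eq : H1 = 1 + f := by rw [hH1f, hG1one, mul_one]
    have hG0ne1 : G0 ≠ 1 := by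
      intro h1
      apply hG1
      funext z
      show G z = 1
      rcases z2 (z (Fin.last m)) with h | h
      · rw [apply_restrict G 0 h]
        exact (congrFun h1 (fun i => z i.castSucc)).trans rfl
      · rw [apply_restrict G 1 h]
        exact (congrFun hG1one (fun i => z i.castSucc)).trans rfl
    have hH0z : H0 = 0 := by
      by_contra hne
      exact hG0ne1 (hA hne)
    by_cases hfzero : f = 0
    · refine le_trans (FAIc_le_FAI f) ?_
      rw [hfzero, FAI_zero]
      exact Nat.zero_le _
    have hfne1 : f ≠ 1 := by
      intro hh
      apply hH1ne
      rw [hH1eq, hh]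
      funext x
      exact z2add 1
    have h1fne0 : (1 : BF m) + f ≠ 0 := by
      intro hh
      apply hfne1
      funext x
      exact z2h2 (f x) (congrFun hh x)
    have h1fne1 : (1 : BF m) + f ≠ 1 := by
      intro hh
      apply hfzero
      funext x
      exact z2h1 (f x) (congrFun hh x)
    by_cases hG0z : G0 = 0
    · -- D3 : G = y
      have hHform : H = fun z => (0 + z (Fin.last m)) *
          (1 + f) (fun i => z i.castSucc) := by
        funext z
        rcases z2 (z (Fin.last m)) with h | h
        · rw [apply_restrict H 0 h, h]
          have e1 : H (Fin.snoc (fun i => z i.castSucc) 0) = 0 :=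
            (congrFun hH0z (fun i => z i.castSucc)).trans rfl
          rw [e1, add_zero, zero_mul]
        · rw [apply_restrict H 1 h, h]
          have e1 : H (Fin.snoc (fun i => z i.castSucc) 1)
              = (1 + f) (fun i => z i.castSucc) :=
            (congrFun hH1eq (fun i => z i.castSucc))
          rw [e1, zero_add, one_mul]
      have hdegH : degB ((1 : BF m) + f) + 1 ≤ degB H := by
        rw [hHform]
        exact degB_lin_mul (1 + f) h1fne0 0
      have hdegG : 1 ≤ degB G := by
        refine one_le_degB_of_ne (x := Fin.snoc x0 1) (y := Fin.snoc x0 0) ?_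
        have e0 : G (Fin.snoc x0 0) = 0 := (congrFun hG0z x0).trans rfl
        have e1 : G (Fin.snoc x0 1) = 1 := (congrFun hG1one x0).trans rfl
        rw [e0, e1]
        decide
      have haff := FAI_le_affine (1 + f) h1fne0 h1fne1
      refine le_trans (FAIc_le_FAI' f) (le_trans haff ?_)
      rw [hFAIeq']
      omega
    · -- D2
      have hΔne1 : G0 + (1 : BF m) ≠ 1 := by
        intro hh
        apply hG0z
        funext x
        exact z2h3 (G0 x) (congrFun hh x)
      have hmul : f * (G0 + (1 : BF m)) = f := by
        funext x
        show f x * (G0 x + 1) = f x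
        have h1 : f x * G0 x = 0 := by
          have h2 := congrFun hH0f x
          have h3 : H0 x = 0 := (congrFun hH0z x).trans rfl
          rw [h3] at h2
          exact h2.symm
        rw [mul_add, mul_one, h1, zero_add]
      have hle := FAI_le f (G0 + 1) hΔne1 (by rw [hmul]; exact hfzero)
      have d1 : degB (G0 + (1 : BF m)) ≤ degB G := by
        rw [show (1 : BF m) = G1 from hG1one.symm]
        exact le_trans (degB_add_le G0 G1) (max_le dG0 dG1)
      have d2 : degB f ≤ degB H := by
        have e0 : f = (1 : BF m) + ((1 : BF m) + f) := (one_add_one_add f).symm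
        have e1 : degB (1 : BF m) = 0 := degB_const 1
        have e2 : degB ((1 : BF m) + f) ≤ degB H := by rw [← hH1eq]; exact dH1
        calc degB f = degB ((1 : BF m) + ((1 : BF m) + f)) := by rw [← e0]
          _ ≤ max (degB (1 : BF m)) (degB ((1 : BF m) + f)) := degB_add_le _ _
          _ ≤ degB H := by rw [e1]; omega
      rw [hmul] at hle
      refine le_trans (FAIc_le_FAI f) (le_trans hle ?_)
      rw [hFAIeq']
      omega

end FAIAux


theorem stmt12 {m : ℕ} (f : BF m) :
    FAIc f ≤ FAIc (fun x : Fin (m + 1) → ZMod 2 =>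
      x (Fin.last m) + f (fun i => x i.castSucc)) ∧
    FAIc (fun x : Fin (m + 1) → ZMod 2 =>
      x (Fin.last m) + f (fun i => x i.castSucc)) ≤ FAIc f + 2 := by
  have hbar : (fun x : Fin (m + 1) → ZMod 2 =>
      x (Fin.last m) + f (fun i => x i.castSucc)) = FAIAux.bar f := rfl
  rw [hbar]
  constructor
  · show FAIc f ≤ min (FAI (FAIAux.bar f)) (FAI (1 + FAIAux.bar f))
    refine le_min (FAIAux.lower f) ?_
    have h2 := FAIAux.lower (1 + f)
    rw [FAIAux.FAIc_one_add, FAIAux.bar_one_add] at h2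
    exact h2
  · have u1 := FAIAux.upper f
    have u2 := FAIAux.upper (1 + f)
    rw [FAIAux.bar_one_add] at u2
    have c1 : FAIc (FAIAux.bar f) ≤ FAI f + 2 := le_trans (FAIAux.FAIc_le_FAI _) u1
    have c2 : FAIc (FAIAux.bar f) ≤ FAI (1 + f) + 2 := le_trans (FAIAux.FAIc_le_FAI' _) u2
    show FAIc (FAIAux.bar f) ≤ min (FAI f) (FAI (1 + f)) + 2
    rcases le_total (FAI f) (FAI (1 + f)) with h | h
    · rw [min_eq_left h]; exact c1
    · rw [min_eq_right h]; exact c2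
end

section
/- Let e be a positive integer, f an n-variable Boolean function with support D ⊆ F_2^n. Then AI(f) > e if and only if the punctured Reed–Muller codes RM(e,n)^D and RM(e,n)^{D̄} (obtained by deleting the coordinates in D, respectively in the complement D̄ of D) both have dimension equal to dim RM(e,n) = Σ_{i=0}^{e} C(n,i). -/
open scoped BigOperators

open MvPolynomial

namespace Stmt13Aux

lemma zmod2_mul_self (a : ZMod 2) : a * a = a := by revert a; decide

lemma zmod2_pow_succ (a : ZMod 2) (k : ℕ) : a ^ (k + 1) = a := by
  induction k with
  | zero => simp
  | succ k ih => rw [pow_succ, ih, zmod2_mul_self]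

lemma zmod2_pow_min (a : ZMod 2) (k : ℕ) : a ^ min k 1 = a ^ k := by
  cases k with
  | zero => simp
  | succ k => rw [Nat.min_eq_right (Nat.succ_le_succ (Nat.zero_le k)), pow_one, zmod2_pow_succ]

variable (n e : ℕ)

/-- evaluation as a linear map -/
noncomputable def E : MvPolynomial (Fin n) (ZMod 2) →ₗ[ZMod 2] BF n := evalₗ (ZMod 2) (Fin n)

/-- multilinear polynomials of total degree ≤ e -/
noncomputable def M : Submodule (ZMod 2) (MvPolynomial (Fin n) (ZMod 2)) :=
  restrictTotalDegree (Fin n) (ZMod 2) e ⊓ restrictDegree (Fin n) (ZMod 2) 1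

/-- squash exponents to ≤ 1 -/
noncomputable def sq (s : Fin n →₀ ℕ) : Fin n →₀ ℕ :=
  Finsupp.mapRange (fun k => min k 1) (by simp) s

lemma sq_apply (s : Fin n →₀ ℕ) (i : Fin n) : sq n s i = min (s i) 1 := rfl

lemma sq_sum_le (s : Fin n →₀ ℕ) : (sq n s).sum (fun _ k => k) ≤ s.sum (fun _ k => k) := by
  rw [sq, Finsupp.sum_mapRange_index (fun _ => rfl)]
  exact Finsupp.sum_le_sum fun i _ => min_le_left _ _

lemma eval_monomial_sq (x : Fin n → ZMod 2) (s : Fin n →₀ ℕ) (c : ZMod 2) :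
    eval x (monomial (sq n s) c) = eval x (monomial s c) := by
  rw [eval_monomial, eval_monomial, sq, Finsupp.prod_mapRange_index (fun i => pow_zero _)]
  exact congrArg (c * ·) (Finsupp.prod_congr fun i _ => zmod2_pow_min _ _)

end Stmt13Aux

namespace Stmt13Aux
variable (n e : ℕ)

/-- the squarefree monomial attached to a set of variables -/
noncomputable def mon (S : Finset (Fin n)) : MvPolynomial (Fin n) (ZMod 2) :=
  monomial (Multiset.toFinsupp (S.val)) 1

lemma toFinsupp_apply (S : Finset (Fin n)) (i : Fin n) :
    Multiset.toFinsupp (S.val) i = if i ∈ S then 1 else 0 := by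
  rw [Multiset.toFinsupp_apply]
  split
  · exact Multiset.count_eq_one_of_mem S.nodup (by assumption)
  · exact Multiset.count_eq_zero_of_notMem (by assumption)

lemma toFinsupp_support (S : Finset (Fin n)) :
    (Multiset.toFinsupp (S.val)).support = S := by
  rw [Multiset.toFinsupp_support, Finset.val_toFinset]

lemma toFinsupp_sum (S : Finset (Fin n)) :
    (Multiset.toFinsupp (S.val)).sum (fun _ k => k) = S.card := by
  rw [Finsupp.sum, toFinsupp_support, Finset.card_eq_sum_ones]
  exact Finset.sum_congr rfl fun i hi => by rw [toFinsupp_apply, if_pos hi]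

lemma sq_eq_self_of_mem {s : Fin n →₀ ℕ} (h : ∀ i, s i ≤ 1) :
    Multiset.toFinsupp ((s.support).val) = s := by
  ext i
  rw [toFinsupp_apply]
  by_cases hi : i ∈ s.support
  · have h1 := h i
    have h2 := Finsupp.mem_support_iff.mp hi
    rw [if_pos hi]; omega
  · rw [if_neg hi]
    exact (Finsupp.notMem_support_iff.mp hi).symm

lemma mon_mem_M (S : Finset (Fin n)) (hS : S.card ≤ e) : mon n S ∈ M n e := by
  constructor
  · rw [SetLike.mem_coe, mem_restrictTotalDegree]
    refine le_trans (totalDegree_monomial_le _ _) ?_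
    calc ((Multiset.toFinsupp S.val).sum fun _ => id)
        = (Multiset.toFinsupp S.val).sum (fun _ k => k) := rfl
      _ = S.card := toFinsupp_sum n S
      _ ≤ e := hS
  · rw [SetLike.mem_coe, mem_restrictDegree]
    intro t ht i
    have ht' : t = Multiset.toFinsupp S.val := by
      simpa using support_monomial_subset ht
    subst ht'
    rw [toFinsupp_apply]
    split <;> omega

lemma M_eq_span : M n e = Submodule.span (ZMod 2)
    (Set.range (fun S : {S : Finset (Fin n) // S.card ≤ e} => mon n S.1)) := by
  apply le_antisymm
  · intro p hp
    obtain ⟨hp1, hp2⟩ := hp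
    rw [SetLike.mem_coe, mem_restrictTotalDegree] at hp1
    rw [SetLike.mem_coe, mem_restrictDegree] at hp2
    rw [p.as_sum]
    refine Submodule.sum_mem _ fun s hs => ?_
    have hle : ∀ i, s i ≤ 1 := fun i => hp2 s hs i
    have hcard : s.support.card ≤ e := by
      calc s.support.card ≤ s.sum (fun _ k => k) := by
            rw [Finset.card_eq_sum_ones, Finsupp.sum]
            exact Finset.sum_le_sum fun i hi =>
              Nat.one_le_iff_ne_zero.mpr (Finsupp.mem_support_iff.mp hi)
        _ ≤ p.totalDegree := le_totalDegree hs
        _ ≤ e := hp1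
    have : monomial s (coeff s p) = coeff s p • mon n s.support := by
      rw [mon, sq_eq_self_of_mem n hle, smul_monomial, smul_eq_mul, mul_one]
    rw [this]
    exact Submodule.smul_mem _ _ (Submodule.subset_span ⟨⟨s.support, hcard⟩, rfl⟩)
  · rw [Submodule.span_le]
    rintro _ ⟨S, rfl⟩
    exact mon_mem_M n e S.1 S.2

lemma mon_injective : Function.Injective (fun S : Finset (Fin n) => Multiset.toFinsupp S.val) := by
  intro S T h
  ext i
  have := congrArg (fun u => (u : Fin n →₀ ℕ) i) h
  simp only [toFinsupp_apply] at this
  by_cases hS : i ∈ S <;> by_cases hT : i ∈ T <;> simp_all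

lemma linIndep_mon : LinearIndependent (ZMod 2)
    (fun S : {S : Finset (Fin n) // S.card ≤ e} => mon n S.1) := by
  have hb := (basisMonomials (Fin n) (ZMod 2)).linearIndependent
  have : (fun S : {S : Finset (Fin n) // S.card ≤ e} => mon n S.1) =
      (basisMonomials (Fin n) (ZMod 2)) ∘
        (fun S : {S : Finset (Fin n) // S.card ≤ e} => Multiset.toFinsupp S.1.val) := by
    funext S; simp [mon, coe_basisMonomials]
  rw [this]
  exact hb.comp _ (fun S T h => Subtype.ext (mon_injective n (by exact h)))

lemma card_le_sets : Fintype.card {S : Finset (Fin n) // S.card ≤ e} =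
    ∑ i ∈ Finset.range (e + 1), n.choose i := by
  classical
  rw [Fintype.card_subtype]
  have : (Finset.univ.filter fun S : Finset (Fin n) => S.card ≤ e) =
      (Finset.range (e + 1)).biUnion (fun i => Finset.powersetCard i Finset.univ) := by
    ext S
    simp [Finset.mem_powersetCard_univ, Nat.lt_succ_iff]
  rw [this, Finset.card_biUnion]
  · exact Finset.sum_congr rfl fun i _ => by
      rw [Finset.card_powersetCard, Finset.card_univ, Fintype.card_fin]
  · intro i _ j _ hij
    apply Finset.disjoint_left.mpr
    intro S hi hj
    rw [Finset.mem_powersetCard_univ] at hi hj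
    exact hij (hi ▸ hj ▸ rfl)

noncomputable instance : FiniteDimensional (ZMod 2) (M n e) := by
  rw [M_eq_span]
  exact FiniteDimensional.span_of_finite _ (Set.finite_range _)

lemma finrank_M : Module.finrank (ZMod 2) (M n e) =
    ∑ i ∈ Finset.range (e + 1), n.choose i := by
  rw [M_eq_span, finrank_span_eq_card (linIndep_mon n e), card_le_sets]

end Stmt13Aux

namespace Stmt13Aux
variable (n e : ℕ)

lemma exists_multilinear {p : MvPolynomial (Fin n) (ZMod 2)} (hp : p.totalDegree ≤ e) :
    ∃ q ∈ M n e, ∀ x, eval x q = eval x p := by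
  refine ⟨∑ s ∈ p.support, monomial (sq n s) (coeff s p), ?_, ?_⟩
  · refine Submodule.sum_mem _ fun s hs => ?_
    constructor
    · rw [SetLike.mem_coe, mem_restrictTotalDegree]
      refine le_trans (totalDegree_monomial_le _ _) ?_
      calc ((sq n s).sum fun _ => id) = (sq n s).sum (fun _ k => k) := rfl
        _ ≤ s.sum (fun _ k => k) := sq_sum_le n s
        _ ≤ p.totalDegree := le_totalDegree hs
        _ ≤ e := hp
    · rw [SetLike.mem_coe, mem_restrictDegree]
      intro t ht i
      have ht' : t = sq n s := by simpa using support_monomial_subset ht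
      subst ht'
      rw [sq_apply]
      omega
  · intro x
    rw [map_sum]
    rw [Finset.sum_congr rfl fun s _ => eval_monomial_sq n x s (coeff s p)]
    conv_rhs => rw [p.as_sum]
    rw [map_sum]

lemma RMcode_eq_map : RMcode n e = Submodule.map (E n) (M n e) := by
  have hset : {f : BF n | ∃ p : MvPolynomial (Fin n) (ZMod 2),
      p.totalDegree ≤ e ∧ ∀ x, MvPolynomial.eval x p = f x} =
      ↑(Submodule.map (E n) (M n e)) := by
    ext f
    constructor
    · rintro ⟨p, hp, hev⟩
      obtain ⟨q, hq, hqe⟩ := exists_multilinear n e hp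
      exact ⟨q, hq, funext fun x => (hqe x).trans (hev x)⟩
    · rintro ⟨q, hq, rfl⟩
      exact ⟨q, (mem_restrictTotalDegree _ _ _).mp hq.1, fun x => rfl⟩
  rw [RMcode, hset, Submodule.span_eq]

lemma E_inj_on_M : ∀ q ∈ M n e, E n q = 0 → q = 0 := by
  intro q hq hq0
  have hcard : Fintype.card (ZMod 2) - 1 = 1 := by rw [ZMod.card]
  refine eq_zero_of_eval_eq_zero (Fin n) (ZMod 2) q (fun v => ?_) (by rw [hcard]; exact hq.2)
  exact congrFun hq0 v

lemma finrank_RMcode : Module.finrank (ZMod 2) (RMcode n e) =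
    ∑ i ∈ Finset.range (e + 1), n.choose i := by
  rw [RMcode_eq_map]
  have hinj : Function.Injective ((E n).comp (M n e).subtype) := by
    rw [← LinearMap.ker_eq_bot, eq_bot_iff]
    rintro ⟨q, hq⟩ hker
    exact Subtype.ext (E_inj_on_M n e q hq hker)
  have hr : LinearMap.range ((E n).comp (M n e).subtype) = Submodule.map (E n) (M n e) := by
    rw [LinearMap.range_comp, Submodule.range_subtype]
  rw [← hr, LinearMap.finrank_range_of_inj hinj, finrank_M]

end Stmt13Aux

namespace Stmt13Aux
variable (n e : ℕ)

lemma exists_rep (g : BF n) : ∃ p : MvPolynomial (Fin n) (ZMod 2), ∀ x, eval x p = g x := by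
  have := map_restrict_dom_evalₗ (ZMod 2) (Fin n)
  have hg : g ∈ (restrictDegree (Fin n) (ZMod 2)
      (Fintype.card (ZMod 2) - 1)).map (evalₗ (ZMod 2) (Fin n)) := by rw [this]; trivial
  obtain ⟨p, _, hp⟩ := hg
  exact ⟨p, fun x => congrFun hp x⟩

lemma degB_le_iff (g : BF n) : degB g ≤ e ↔ g ∈ RMcode n e := by
  have hne : {d | ∃ p : MvPolynomial (Fin n) (ZMod 2),
      (∀ x, MvPolynomial.eval x p = g x) ∧ p.totalDegree ≤ d}.Nonempty := by
    obtain ⟨p, hp⟩ := exists_rep n g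
    exact ⟨p.totalDegree, p, hp, le_rfl⟩
  constructor
  · intro hle
    obtain ⟨p, hp, hd⟩ := Nat.sInf_mem hne
    exact Submodule.subset_span ⟨p, le_trans hd hle, hp⟩
  · intro hg
    rw [RMcode_eq_map] at hg
    obtain ⟨q, hq, rfl⟩ := hg
    exact Nat.sInf_le ⟨q, fun x => rfl, (mem_restrictTotalDegree _ _ _).mp hq.1⟩

lemma mul_eq_zero_iff (h g : BF n) : h * g = 0 ↔ ∀ x ∈ suppB h, g x = 0 := by
  have key : ∀ a b : ZMod 2, (a * b = 0 ↔ (a = 1 → b = 0)) := by decide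
  rw [funext_iff]
  constructor
  · intro H x hx
    exact (key _ _).mp (H x) hx
  · intro H x
    exact (key _ _).mpr (fun hx => H x hx)

lemma finrank_restrict_iff (C : Submodule (ZMod 2) (BF n)) (S : Set (Fin n → ZMod 2)) :
    Module.finrank (ZMod 2) (restrictCode C S) = Module.finrank (ZMod 2) C ↔
      ∀ g ∈ C, (∀ x ∈ S, g x = 0) → g = 0 := by
  set φ := (LinearMap.funLeft (ZMod 2) (ZMod 2) (Subtype.val : S → (Fin n → ZMod 2))).comp
    C.subtype with hφ
  have hr : LinearMap.range φ = restrictCode C S := by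
    rw [hφ, LinearMap.range_comp, Submodule.range_subtype]; rfl
  have hrn := LinearMap.finrank_range_add_finrank_ker φ
  rw [hr] at hrn
  have hker : LinearMap.ker φ = ⊥ ↔ ∀ g ∈ C, (∀ x ∈ S, g x = 0) → g = 0 := by
    constructor
    · intro hk g hg hv
      have : (⟨g, hg⟩ : C) ∈ LinearMap.ker φ := by
        ext x
        exact hv x.1 x.2
      rw [hk] at this
      exact congrArg Subtype.val this
    · intro H
      rw [eq_bot_iff]
      rintro ⟨g, hg⟩ hk
      have : ∀ x ∈ S, g x = 0 := fun x hx => congrFun (LinearMap.mem_ker.mp hk) ⟨x, hx⟩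
      exact Subtype.ext (H g hg this)
  have hk : Module.finrank (ZMod 2) (LinearMap.ker φ) = 0 ↔ LinearMap.ker φ = ⊥ :=
    Submodule.finrank_eq_zero
  have hrn' : Module.finrank (ZMod 2) (restrictCode C S) +
      Module.finrank (ZMod 2) (LinearMap.ker φ) = Module.finrank (ZMod 2) C := hrn
  rw [← hker, ← hk, ← hrn']
  omega

lemma sum_choose_pos : 0 < ∑ i ∈ Finset.range (e + 1), n.choose i := by
  have h0 : (0 : ℕ) ∈ Finset.range (e + 1) := by simp
  have := Finset.single_le_sum (f := fun i => n.choose i) (fun i _ => Nat.zero_le _) h0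
  exact Nat.lt_of_lt_of_le Nat.zero_lt_one (by simpa [Nat.choose_zero_right] using this)

end Stmt13Aux

namespace Stmt13Aux
variable (n e : ℕ)

lemma one_ne_zero_BF : (1 : BF n) ≠ 0 := by
  intro h
  have := congrFun h (fun _ => 0)
  simp at this

lemma degB_one : degB (1 : BF n) = 0 := by
  refine Nat.le_zero.mp (Nat.sInf_le ?_)
  exact ⟨(1 : MvPolynomial (Fin n) (ZMod 2)), fun x => by simp, le_of_eq totalDegree_one⟩

lemma LDA_zero : LDA (0 : BF n) = 0 := by
  have h := Nat.sInf_le (s := {m | ∃ g : BF n, g ≠ 0 ∧ 0 * g = 0 ∧ m = degB g})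
    ⟨1, one_ne_zero_BF n, zero_mul _, rfl⟩
  have h2 : LDA (0 : BF n) ≤ degB (1 : BF n) := h
  rw [degB_one] at h2
  omega

lemma mul_one_add_self (h : BF n) : h * (1 + h) = 0 := by
  funext x
  have key : ∀ a : ZMod 2, a * (1 + a) = 0 := by decide
  exact key (h x)

lemma one_add_ne_zero {h : BF n} (hne : h ≠ 1) : 1 + h ≠ 0 := by
  intro h0
  apply hne
  funext x
  have key : ∀ a : ZMod 2, 1 + a = 0 → a = 1 := by decide
  exact key _ (congrFun h0 x)

lemma lt_LDA_iff (h : BF n) (hne : h ≠ 1) :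
    e < LDA h ↔ Module.finrank (ZMod 2) (restrictCode (RMcode n e) (suppB h)) =
      ∑ i ∈ Finset.range (e + 1), n.choose i := by
  rw [show (∑ i ∈ Finset.range (e + 1), n.choose i) =
      Module.finrank (ZMod 2) (RMcode n e) from (finrank_RMcode n e).symm,
    finrank_restrict_iff]
  constructor
  · intro hlt g hg hv
    by_contra hg0
    have h1 : LDA h ≤ degB g := Nat.sInf_le ⟨g, hg0, (mul_eq_zero_iff n h g).mpr hv, rfl⟩
    have h2 : degB g ≤ e := (degB_le_iff n e g).mpr hg
    omega
  · intro H
    have hSne : {m | ∃ g : BF n, g ≠ 0 ∧ h * g = 0 ∧ m = degB g}.Nonempty :=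
      ⟨degB (1 + h), 1 + h, one_add_ne_zero n hne, mul_one_add_self n h, rfl⟩
    obtain ⟨g, hg0, hgm, hEq⟩ := Nat.sInf_mem hSne
    have hL : LDA h = degB g := hEq
    rw [hL]
    by_contra hc
    push_neg at hc
    exact hg0 (H g ((degB_le_iff n e g).mp hc)
      (fun x hx => (mul_eq_zero_iff n h g).mp hgm x hx))

lemma suppB_one_add (f : BF n) : suppB (1 + f) = (suppB f)ᶜ := by
  ext x
  simp only [suppB, Set.mem_compl_iff, Set.mem_setOf_eq, Pi.add_apply, Pi.one_apply]
  have key : ∀ a : ZMod 2, (1 + a = 1 ↔ ¬ a = 1) := by decide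
  exact key (f x)

lemma finrank_restrict_empty (C : Submodule (ZMod 2) (BF n)) (S : Set (Fin n → ZMod 2))
    (hS : S = ∅) : Module.finrank (ZMod 2) (restrictCode C S) = 0 := by
  subst hS
  haveI : IsEmpty (↥(∅ : Set (Fin n → ZMod 2))) := by simp [Set.isEmpty_coe_sort]
  haveI : Subsingleton (↥(∅ : Set (Fin n → ZMod 2)) → ZMod 2) := inferInstance
  haveI : Subsingleton (restrictCode C (∅ : Set (Fin n → ZMod 2))) := by
    constructor; intro a b; exact Subtype.ext (Subsingleton.elim _ _)
  exact Module.finrank_zero_of_subsingleton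

end Stmt13Aux


theorem stmt13 {n : ℕ} (e : ℕ) (he : 1 ≤ e) (f : BF n) :
    e < AI f ↔
      (Module.finrank (ZMod 2) (restrictCode (RMcode n e) (suppB f)ᶜ) =
          ∑ i ∈ Finset.range (e + 1), n.choose i ∧
        Module.finrank (ZMod 2) (restrictCode (RMcode n e) (suppB f)) =
          ∑ i ∈ Finset.range (e + 1), n.choose i) := by
  classical
  by_cases hf1 : f = 1
  · subst hf1
    apply iff_of_false
    · intro hlt
      have h11 : (1 : BF n) + 1 = 0 := by
        funext x; show (1 : ZMod 2) + 1 = 0; decide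
      have hmin : AI (1 : BF n) ≤ LDA ((1 : BF n) + (1 : BF n)) := min_le_right _ _
      rw [h11, Stmt13Aux.LDA_zero] at hmin
      omega
    · rintro ⟨h1, _⟩
      have hempty : (suppB (1 : BF n))ᶜ = ∅ := by
        ext x; simp [suppB]
      rw [Stmt13Aux.finrank_restrict_empty n _ _ hempty] at h1
      have := Stmt13Aux.sum_choose_pos n e
      omega
  · by_cases hf0 : f = 0
    · subst hf0
      apply iff_of_false
      · intro hlt
        have hmin : AI (0 : BF n) ≤ LDA (0 : BF n) := min_le_left _ _
        rw [Stmt13Aux.LDA_zero] at hmin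
        omega
      · rintro ⟨_, h2⟩
        have hempty : suppB (0 : BF n) = ∅ := by ext x; simp [suppB]
        rw [Stmt13Aux.finrank_restrict_empty n _ _ hempty] at h2
        have := Stmt13Aux.sum_choose_pos n e
        omega
    · rw [AI, lt_min_iff]
      have hne1 : (1 : BF n) + f ≠ 1 := by
        intro hEq
        apply hf0
        funext x
        have key : ∀ a : ZMod 2, 1 + a = 1 → a = 0 := by decide
        exact key _ (congrFun hEq x)
      rw [Stmt13Aux.lt_LDA_iff n e f hf1, Stmt13Aux.lt_LDA_iff n e (1 + f) hne1,
        Stmt13Aux.suppB_one_add]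
      exact and_comm
end

section
/- Let C be an even-like binary linear code with parameters [ℓ, k]. If C is LCD, then k is even. -/
open scoped BigOperators

open LinearMap (BilinForm)
open Module

lemma altNondegEven (K : Type) [Field K] :
    ∀ n : ℕ, ∀ (V : Type) (_ : AddCommGroup V), ∀ (_ : Module K V),
      ∀ (_ : FiniteDimensional K V), ∀ B : BilinForm K V,
        B.IsAlt → B.Nondegenerate → finrank K V = n → Even n := by
  intro n
  induction n using Nat.strong_induction_on with
  | _ n ih =>
    intro V _ _ _ B halt hnd hrank
    rcases Nat.eq_zero_or_pos n with h0 | hpos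
    · simp [h0]
    have hrefl := halt.isRefl
    have : Nontrivial V := by
      apply Module.nontrivial_of_finrank_pos (R := K); omega
    obtain ⟨x, hx⟩ := exists_ne (0 : V)
    obtain ⟨y, hy⟩ : ∃ y, B x y ≠ 0 := by
      by_contra h; push_neg at h; exact hx (hnd.1 x h)
    -- x, y linearly independent
    have hxx : B x x = 0 := halt x
    have hyy : B y y = 0 := halt y
    have hyx : B y x ≠ 0 := fun h => hy (hrefl y x h)
    set W : Submodule K V := Submodule.span K {x, y} with hW
    have hxW : x ∈ W := Submodule.subset_span (by simp)
    have hyW : y ∈ W := Submodule.subset_span (by simp)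
    have hndW : (B.restrict W).Nondegenerate := by
      apply (LinearMap.IsRefl.nondegenerate_iff_separatingLeft (B := B.restrict W)
        (fun a b h => hrefl _ _ h)).mpr
      rintro ⟨w, hw⟩ hww
      obtain ⟨a, b, rfl⟩ := Submodule.mem_span_pair.mp hw
      have h1 : B (a • x + b • y) x = 0 := hww ⟨x, hxW⟩
      have h2 : B (a • x + b • y) y = 0 := hww ⟨y, hyW⟩
      simp only [map_add, map_smul, LinearMap.add_apply, LinearMap.smul_apply,
        smul_eq_mul, hxx, hyy, mul_zero, zero_add, add_zero] at h1 h2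
      have hb : b = 0 := by
        rcases mul_eq_zero.mp h1 with h | h
        · exact h
        · exact absurd h hyx
      have ha : a = 0 := by
        rcases mul_eq_zero.mp h2 with h | h
        · exact h
        · exact absurd h hy
      simp [ha, hb]
    have hli : LinearIndependent K ![x, y] := by
      rw [LinearIndependent.pair_iff]
      intro s t hst
      have h2 : B (s • x + t • y) y = 0 := by rw [hst]; simp
      simp only [map_add, map_smul, LinearMap.add_apply, LinearMap.smul_apply,
        smul_eq_mul, hxx, hyy, mul_zero, add_zero] at h2
      have hs : s = 0 := by
        rcases mul_eq_zero.mp h2 with h | h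
        · exact h
        · exact absurd h hy
      have h1 : B (s • x + t • y) x = 0 := by rw [hst]; simp
      simp only [map_add, map_smul, LinearMap.add_apply, LinearMap.smul_apply,
        smul_eq_mul, hxx, mul_zero, zero_add] at h1
      have ht : t = 0 := by
        rcases mul_eq_zero.mp h1 with h | h
        · exact h
        · exact absurd h hyx
      exact ⟨hs, ht⟩
    have hrankW : finrank K W = 2 := by
      have hr : Set.range ![x, y] = ({x, y} : Set V) := by
        ext z; simp [Matrix.range_cons, Matrix.range_empty, or_comm]
      have := finrank_span_eq_card (R := K) hli
      rw [hr] at this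
      simpa [hW] using this
    have hcompl : IsCompl W (B.orthogonal W) :=
      B.isCompl_orthogonal_of_restrict_nondegenerate hrefl hndW
    have hrankO : finrank K (B.orthogonal W) = n - 2 := by
      rw [LinearMap.BilinForm.finrank_orthogonal hnd, hrank, hrankW]
    have hndO : (B.restrict (B.orthogonal W)).Nondegenerate := by
      rw [LinearMap.BilinForm.restrict_nondegenerate_iff_isCompl_orthogonal hrefl,
        LinearMap.BilinForm.orthogonal_orthogonal hnd hrefl]
      exact hcompl.symm
    have haltO : (B.restrict (B.orthogonal W)).IsAlt := fun z => halt z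
    have h2le : 2 ≤ n := by
      have := Submodule.finrank_le W
      omega
    have hn2 : n - 2 < n := by omega
    have heven := ih (n - 2) hn2 (B.orthogonal W) inferInstance inferInstance
      inferInstance (B.restrict (B.orthogonal W)) haltO hndO hrankO
    obtain ⟨m, hm⟩ := heven
    exact ⟨m + 1, by omega⟩

noncomputable def dotForm (ℓ : ℕ) : BilinForm (ZMod 2) (Fin ℓ → ZMod 2) :=
  LinearMap.mk₂ (ZMod 2) (fun v w => ∑ i, v i * w i)
    (by intro a b c; simp [add_mul, Finset.sum_add_distrib])
    (by intro r a b; simp [Finset.mul_sum, mul_assoc])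
    (by intro a b c; simp [mul_add, Finset.sum_add_distrib])
    (by intro r a b; simp [Finset.mul_sum]; congr 1; ext i; ring)

theorem stmt19 {ℓ k : ℕ} (C : Submodule (ZMod 2) (Fin ℓ → ZMod 2))
    (hdim : Module.finrank (ZMod 2) C = k)
    (hevenlike : ∀ c ∈ C, ∑ i, c i = 0)
    (hLCD : C ⊓ dualCode C = ⊥) :
    Even k := by
  subst hdim
  set B := (dotForm ℓ).restrict C with hB
  have halt : B.IsAlt := by
    intro c
    have h1 : ∀ a : ZMod 2, a * a = a := by decide
    show ∑ i, (c : Fin ℓ → ZMod 2) i * (c : Fin ℓ → ZMod 2) i = 0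
    calc ∑ i, (c : Fin ℓ → ZMod 2) i * (c : Fin ℓ → ZMod 2) i
        = ∑ i, (c : Fin ℓ → ZMod 2) i := by
          exact Finset.sum_congr rfl fun i _ => h1 _
      _ = 0 := hevenlike c c.2
  have hnd : B.Nondegenerate := by
    apply (LinearMap.IsRefl.nondegenerate_iff_separatingLeft halt.isRefl).mpr
    intro c hc
    have hmem : (c : Fin ℓ → ZMod 2) ∈ C ⊓ dualCode C := by
      refine ⟨c.2, ?_⟩
      intro w hw
      exact hc ⟨w, hw⟩
    rw [hLCD] at hmem
    exact Subtype.ext hmem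
  exact altNondegEven (ZMod 2) _ ↥C inferInstance inferInstance inferInstance B halt hnd rfl
end
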